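/- arXiv:1212.6560 — 6 statements merged into one kernel-verified Lean document; each statement's English description precedes it below -/
import Mathlib

section
/- Let a, b, c ∈ ℝ³ be mutually orthogonal vectors of the same (positive) magnitude, i.e. ⟨a,b⟩ = ⟨a,c⟩ = ⟨b,c⟩ = 0, ‖a‖ = ‖b‖ = ‖c‖ > 0, and suppose ⟨a × b, c⟩ > 0. Then there exists a spinor φ = (φ₁, φ₂) ∈ ℂ² such that a + ib = (φ₁² − φ₂², i(φ₁² + φ₂²), −2φ₁φ₂) and c = (φ₁·conj(φ₂) + conj(φ₁)·φ₂, i(conj(φ₂)φ₁ − conj(φ₁)φ₂), |φ₁|² − |φ₂|²). -/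
private lemma triad_component (a1 a2 a3 b1 b2 b3 c1 c2 c3 : ℝ)
    (hab : a1*b1 + a2*b2 + a3*b3 = 0)
    (hac : a1*c1 + a2*c2 + a3*c3 = 0)
    (hbc : b1*c1 + b2*c2 + b3*c3 = 0)
    (hn : a1*a1 + a2*a2 + a3*a3 = b1*b1 + b2*b2 + b3*b3) :
    (a1*a1 + a2*a2 + a3*a3)^2 * c1
      = ((a2*b3 - a3*b2)*c1 + (a3*b1 - a1*b3)*c2 + (a1*b2 - a2*b1)*c3) * (a2*b3 - a3*b2) := by
  linear_combination (-((a3*b1 - a1*b3)*b3 - (a1*b2 - a2*b1)*b2)) * hac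
    + ((a3*b1 - a1*b3)*a3 - (a1*b2 - a2*b1)*a2) * hbc
    + ((a1*a1 + a2*a2 + a3*a3)*c1) * hn
    + ((a1*b1 + a2*b2 + a3*b3)*c1) * hab

set_option maxHeartbeats 1000000 in
private lemma triad_cross (a b c : Fin 3 → ℝ)
    (hab : a 0 * b 0 + a 1 * b 1 + a 2 * b 2 = 0)
    (hac : a 0 * c 0 + a 1 * c 1 + a 2 * c 2 = 0)
    (hbc : b 0 * c 0 + b 1 * c 1 + b 2 * c 2 = 0)
    (hnorm_ab : a 0 * a 0 + a 1 * a 1 + a 2 * a 2 = b 0 * b 0 + b 1 * b 1 + b 2 * b 2)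
    (hnorm_bc : b 0 * b 0 + b 1 * b 1 + b 2 * b 2 = c 0 * c 0 + c 1 * c 1 + c 2 * c 2)
    (hpos : 0 < a 0 * a 0 + a 1 * a 1 + a 2 * a 2)
    (horient : 0 < (a 1 * b 2 - a 2 * b 1) * c 0 + (a 2 * b 0 - a 0 * b 2) * c 1
      + (a 0 * b 1 - a 1 * b 0) * c 2) :
    ∃ r : ℝ, 0 < r ∧ r^2 = a 0 * a 0 + a 1 * a 1 + a 2 * a 2 ∧
      r * c 0 = a 1 * b 2 - a 2 * b 1 ∧
      r * c 1 = a 2 * b 0 - a 0 * b 2 ∧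
      r * c 2 = a 0 * b 1 - a 1 * b 0 := by
  have E10 := triad_component (a 0) (a 1) (a 2) (b 0) (b 1) (b 2) (c 0) (c 1) (c 2)
    hab hac hbc hnorm_ab
  have E11 := triad_component (a 1) (a 2) (a 0) (b 1) (b 2) (b 0) (c 1) (c 2) (c 0)
    (by linear_combination hab) (by linear_combination hac) (by linear_combination hbc)
    (by linear_combination hnorm_ab)
  have E12 := triad_component (a 2) (a 0) (a 1) (b 2) (b 0) (b 1) (c 2) (c 0) (c 1)
    (by linear_combination hab) (by linear_combination hac) (by linear_combination hbc)
    (by linear_combination hnorm_ab)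
  set A := a 0 * a 0 + a 1 * a 1 + a 2 * a 2 with hAdef
  set s := (a 1 * b 2 - a 2 * b 1) * c 0 + (a 2 * b 0 - a 0 * b 2) * c 1
      + (a 0 * b 1 - a 1 * b 0) * c 2 with hsdef
  have hA3 : A^3 = s^2 := by
    linear_combination (c 0) * E10 + (c 1) * E11 + (c 2) * E12 + A^2 * hnorm_ab + A^2 * hnorm_bc
  set r := Real.sqrt A with hrdef
  have hr : 0 < r := Real.sqrt_pos.2 hpos
  have hr2 : r^2 = A := Real.sq_sqrt hpos.le
  have hs3 : s = r^3 := by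
    have h : (s - r^3) * (s + r^3) = 0 := by
      linear_combination -hA3 - (r^4 + A*r^2 + A^2) * hr2
    rcases mul_eq_zero.1 h with h' | h'
    · linarith
    · nlinarith [pow_pos hr 3]
  have hr3 := pow_ne_zero 3 hr.ne'
  refine ⟨r, hr, hr2, ?_, ?_, ?_⟩
  · exact mul_left_cancel₀ hr3
      (by linear_combination E10 + ((r^2+A)*(c 0))*hr2 + (a 1 * b 2 - a 2 * b 1)*hs3)
  · exact mul_left_cancel₀ hr3
      (by linear_combination E11 + ((r^2+A)*(c 1))*hr2 + (a 2 * b 0 - a 0 * b 2)*hs3)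
  · exact mul_left_cancel₀ hr3
      (by linear_combination E12 + ((r^2+A)*(c 2))*hr2 + (a 0 * b 1 - a 1 * b 0)*hs3)

private lemma spinor_exists (a0 a1 a2 b0 b1 b2 : ℝ)
    (hab : a0*b0 + a1*b1 + a2*b2 = 0)
    (hn : a0*a0 + a1*a1 + a2*a2 = b0*b0 + b1*b1 + b2*b2) :
    ∃ φ₁ φ₂ : ℂ,
      φ₁^2 - φ₂^2 = (a0:ℂ) + Complex.I * b0 ∧
      Complex.I * (φ₁^2 + φ₂^2) = (a1:ℂ) + Complex.I * b1 ∧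
      -2*φ₁*φ₂ = (a2:ℂ) + Complex.I * b2 := by
  have hiso : ((a0:ℂ) + Complex.I * b0)^2 + ((a1:ℂ) + Complex.I * b1)^2
      + ((a2:ℂ) + Complex.I * b2)^2 = 0 := by
    have h1 : ((a0*a0 + a1*a1 + a2*a2 : ℝ) : ℂ) = ((b0*b0 + b1*b1 + b2*b2 : ℝ) : ℂ) := by
      exact_mod_cast hn
    have h2 : ((a0*b0 + a1*b1 + a2*b2 : ℝ) : ℂ) = 0 := by exact_mod_cast hab
    push_cast at h1 h2
    linear_combination h1 + 2*Complex.I*h2 + ((b0:ℂ)^2+(b1:ℂ)^2+(b2:ℂ)^2)*Complex.I_sq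
  obtain ⟨p, hpdef⟩ : ∃ p : ℂ, p = (((a0:ℂ) + Complex.I * b0)
      - Complex.I * ((a1:ℂ) + Complex.I * b1))/2 := ⟨_, rfl⟩
  obtain ⟨q, hqdef⟩ : ∃ q : ℂ, q = (-((a0:ℂ) + Complex.I * b0)
      - Complex.I * ((a1:ℂ) + Complex.I * b1))/2 := ⟨_, rfl⟩
  have hpq : 4*(p*q) = ((a2:ℂ) + Complex.I * b2)^2 := by
    linear_combination 4*q*hpdef
      + 4*((((a0:ℂ) + Complex.I * b0) - Complex.I * ((a1:ℂ) + Complex.I * b1))/2)*hqdef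
      - hiso + (((a1:ℂ) + Complex.I * b1)^2)*Complex.I_sq
  by_cases hp0 : p = 0
  · have hm3sq : ((a2:ℂ) + Complex.I * b2)^2 = 0 := by linear_combination -hpq + 4*q*hp0
    have hm3 : ((a2:ℂ) + Complex.I * b2) = 0 := by
      exact pow_eq_zero_iff two_ne_zero |>.1 hm3sq
    obtain ⟨φ₂, h2⟩ := IsAlgClosed.exists_pow_nat_eq q (n := 2) two_pos
    refine ⟨0, φ₂, ?_, ?_, ?_⟩
    · linear_combination -h2 - hqdef + hpdef - hp0
    · linear_combination Complex.I*h2 + Complex.I*hqdef + Complex.I*hpdef - Complex.I*hp0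
        - ((a1:ℂ) + Complex.I * b1)*Complex.I_sq
    · linear_combination -hm3
  · obtain ⟨φ₁, h1⟩ := IsAlgClosed.exists_pow_nat_eq p (n := 2) two_pos
    have hφ1 : φ₁ ≠ 0 := by
      rintro rfl
      exact hp0 (by simpa using h1.symm)
    refine ⟨φ₁, -((a2:ℂ) + Complex.I * b2)/(2*φ₁), ?_, ?_, ?_⟩
    · have hsq2 : (-((a2:ℂ) + Complex.I * b2)/(2*φ₁))^2 = q := by
        field_simp
        linear_combination -hpq - 4*q*h1
      linear_combination h1 - hsq2 + hpdef - hqdef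
    · have hsq2 : (-((a2:ℂ) + Complex.I * b2)/(2*φ₁))^2 = q := by
        field_simp
        linear_combination -hpq - 4*q*h1
      linear_combination Complex.I*h1 + Complex.I*hsq2 + Complex.I*hpdef + Complex.I*hqdef
        - ((a1:ℂ) + Complex.I * b1)*Complex.I_sq
    · field_simp

set_option maxHeartbeats 2000000 in
/-- If `a, b, c ∈ ℝ³` are mutually orthogonal vectors of the same
positive magnitude with `⟨a × b, c⟩ > 0`, then there exists a spinor
`φ = (φ₁, φ₂) ∈ ℂ²` with `a + ib = (φ₁² − φ₂², i(φ₁² + φ₂²), −2φ₁φ₂)` and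
`c = (φ₁·conj φ₂ + conj φ₁·φ₂, i(conj φ₂·φ₁ − conj φ₁·φ₂), |φ₁|² − |φ₂|²)`. -/
theorem exists_spinor_of_orthogonal_triad (a b c : Fin 3 → ℝ)
    (hab : dotProduct a b = 0)
    (hac : dotProduct a c = 0)
    (hbc : dotProduct b c = 0)
    (hnorm_ab : dotProduct a a = dotProduct b b)
    (hnorm_bc : dotProduct b b = dotProduct c c)
    (hpos : 0 < dotProduct a a)
    (horient : 0 < dotProduct (crossProduct a b) c) :
    ∃ φ₁ φ₂ : ℂ,
      (∀ i, (a i : ℂ) + Complex.I * (b i : ℂ) =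
        ![φ₁ ^ 2 - φ₂ ^ 2, Complex.I * (φ₁ ^ 2 + φ₂ ^ 2), -2 * φ₁ * φ₂] i) ∧
      (∀ i, (c i : ℂ) =
        ![φ₁ * (starRingEnd ℂ) φ₂ + (starRingEnd ℂ) φ₁ * φ₂,
          Complex.I * ((starRingEnd ℂ) φ₂ * φ₁ - (starRingEnd ℂ) φ₁ * φ₂),
          ((‖φ₁‖ ^ 2 - ‖φ₂‖ ^ 2 : ℝ) : ℂ)] i) := by
  simp only [dotProduct, Fin.sum_univ_three, crossProduct, Matrix.cons_val_zero,
    Matrix.cons_val_one, Matrix.head_cons, Matrix.cons_val_two, Matrix.tail_cons,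
    LinearMap.mk₂_apply] at hab hac hbc hnorm_ab hnorm_bc hpos horient
  obtain ⟨φ₁, φ₂, heq1, heq2, heq3⟩ :=
    spinor_exists (a 0) (a 1) (a 2) (b 0) (b 1) (b 2) hab hnorm_ab
  obtain ⟨r, hr, hr2, hc0, hc1, hc2⟩ :=
    triad_cross a b c hab hac hbc hnorm_ab hnorm_bc hpos horient
  -- real/imaginary parts
  have ra0 : a 0 = φ₁.re^2 - φ₁.im^2 - φ₂.re^2 + φ₂.im^2 := by
    have h := congrArg Complex.re heq1
    simp [pow_two, Complex.mul_re, Complex.add_re, Complex.mul_im] at h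
    linear_combination -h
  have rb0 : b 0 = 2*φ₁.re*φ₁.im - 2*φ₂.re*φ₂.im := by
    have h := congrArg Complex.im heq1
    simp [pow_two, Complex.mul_re, Complex.add_im, Complex.mul_im] at h
    linear_combination -h
  have ra1 : a 1 = -(2*φ₁.re*φ₁.im + 2*φ₂.re*φ₂.im) := by
    have h := congrArg Complex.re heq2
    simp [pow_two, Complex.mul_re, Complex.add_re, Complex.mul_im] at h
    linear_combination -h
  have rb1 : b 1 = φ₁.re^2 - φ₁.im^2 + φ₂.re^2 - φ₂.im^2 := by
    have h := congrArg Complex.im heq2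
    simp [pow_two, Complex.mul_re, Complex.add_im, Complex.mul_im] at h
    linear_combination -h
  have ra2 : a 2 = -(2*(φ₁.re*φ₂.re - φ₁.im*φ₂.im)) := by
    have h := congrArg Complex.re heq3
    simp [pow_two, Complex.mul_re, Complex.add_re, Complex.mul_im] at h
    linear_combination -h
  have rb2 : b 2 = -(2*(φ₁.re*φ₂.im + φ₁.im*φ₂.re)) := by
    have h := congrArg Complex.im heq3
    simp [pow_two, Complex.mul_re, Complex.add_im, Complex.mul_im] at h
    linear_combination -h
  have hNr : φ₁.re^2 + φ₁.im^2 + φ₂.re^2 + φ₂.im^2 = r := by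
    have hN2 : (φ₁.re^2 + φ₁.im^2 + φ₂.re^2 + φ₂.im^2)^2 = r^2 := by
      rw [hr2, ra0, ra1, ra2]; ring
    have h : (φ₁.re^2 + φ₁.im^2 + φ₂.re^2 + φ₂.im^2 - r)
        * (φ₁.re^2 + φ₁.im^2 + φ₂.re^2 + φ₂.im^2 + r) = 0 := by
      linear_combination hN2
    rcases mul_eq_zero.1 h with h' | h'
    · linarith
    · nlinarith [sq_nonneg φ₁.re, sq_nonneg φ₁.im, sq_nonneg φ₂.re, sq_nonneg φ₂.im]
  have gc0 : c 0 = 2*(φ₁.re*φ₂.re + φ₁.im*φ₂.im) := by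
    apply mul_left_cancel₀ hr.ne'
    rw [hc0, ra1, ra2, rb1, rb2, ← hNr]; ring
  have gc1 : c 1 = 2*(φ₁.re*φ₂.im - φ₁.im*φ₂.re) := by
    apply mul_left_cancel₀ hr.ne'
    rw [hc1, ra0, ra2, rb0, rb2, ← hNr]; ring
  have gc2 : c 2 = φ₁.re^2 + φ₁.im^2 - φ₂.re^2 - φ₂.im^2 := by
    apply mul_left_cancel₀ hr.ne'
    rw [hc2, ra0, ra1, rb0, rb1, ← hNr]; ring
  refine ⟨φ₁, φ₂, ?_, ?_⟩
  · intro i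
    fin_cases i
    · exact heq1.symm
    · exact heq2.symm
    · exact heq3.symm
  · intro i
    fin_cases i
    · show (c 0 : ℂ) = _
      rw [gc0]
      apply Complex.ext <;>
        simp [Complex.add_re, Complex.add_im, Complex.mul_re, Complex.mul_im] <;> ring
    · show (c 1 : ℂ) = _
      rw [gc1]
      apply Complex.ext <;>
        simp [Complex.add_re, Complex.add_im, Complex.mul_re, Complex.mul_im] <;> ring
    · show (c 2 : ℂ) = ((‖φ₁‖ ^ 2 - ‖φ₂‖ ^ 2 : ℝ) : ℂ)
      norm_cast
      rw [Complex.sq_norm, Complex.sq_norm, Complex.normSq_apply, Complex.normSq_apply, gc2]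
      ring
end

section
/- Let φ, ψ ∈ ℂ² be spinors producing the same associated vectors, i.e. φ₁² − φ₂² = ψ₁² − ψ₂², φ₁² + φ₂² = ψ₁² + ψ₂², φ₁φ₂ = ψ₁ψ₂, φ₁·conj(φ₂) + conj(φ₁)·φ₂ = ψ₁·conj(ψ₂) + conj(ψ₁)·ψ₂, conj(φ₂)φ₁ − conj(φ₁)φ₂ = conj(ψ₂)ψ₁ − conj(ψ₁)ψ₂, and |φ₁|² − |φ₂|² = |ψ₁|² − |ψ₂|². If φ ≠ 0, then ψ = φ or ψ = −φ. (The correspondence between spinors and ordered orthonormal triads is two-to-one.) -/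
/-- Two spinors producing the same associated ordered triad of
vectors agree up to sign: the correspondence between spinors and ordered
orthonormal triads is two-to-one. -/
theorem spinor_two_to_one (φ₁ φ₂ ψ₁ ψ₂ : ℂ)
    (h1 : φ₁ ^ 2 - φ₂ ^ 2 = ψ₁ ^ 2 - ψ₂ ^ 2)
    (h2 : φ₁ ^ 2 + φ₂ ^ 2 = ψ₁ ^ 2 + ψ₂ ^ 2)
    (h3 : φ₁ * φ₂ = ψ₁ * ψ₂)
    (h4 : φ₁ * (starRingEnd ℂ) φ₂ + (starRingEnd ℂ) φ₁ * φ₂ =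
          ψ₁ * (starRingEnd ℂ) ψ₂ + (starRingEnd ℂ) ψ₁ * ψ₂)
    (h5 : (starRingEnd ℂ) φ₂ * φ₁ - (starRingEnd ℂ) φ₁ * φ₂ =
          (starRingEnd ℂ) ψ₂ * ψ₁ - (starRingEnd ℂ) ψ₁ * ψ₂)
    (h6 : ‖φ₁‖ ^ 2 - ‖φ₂‖ ^ 2 =
          ‖ψ₁‖ ^ 2 - ‖ψ₂‖ ^ 2)
    (hne : ¬(φ₁ = 0 ∧ φ₂ = 0)) :
    (ψ₁ = φ₁ ∧ ψ₂ = φ₂) ∨ (ψ₁ = -φ₁ ∧ ψ₂ = -φ₂) := by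
  have hA : (ψ₁ - φ₁) * (ψ₁ + φ₁) = 0 := by linear_combination -(h1 + h2) / 2
  have hB : (ψ₂ - φ₂) * (ψ₂ + φ₂) = 0 := by linear_combination (h1 - h2) / 2
  rcases mul_eq_zero.1 hA with a | a <;> rcases mul_eq_zero.1 hB with b | b <;>
    [skip; skip; skip; skip]
  · exact Or.inl ⟨sub_eq_zero.1 a, sub_eq_zero.1 b⟩
  · -- ψ₁ = φ₁, ψ₂ = -φ₂
    have ha : ψ₁ = φ₁ := sub_eq_zero.1 a
    have hb : ψ₂ = -φ₂ := eq_neg_of_add_eq_zero_left b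
    have h0 : φ₁ * φ₂ = 0 := by
      have := h3; rw [ha, hb] at this; linear_combination this / 2
    rcases mul_eq_zero.1 h0 with h | h
    · exact Or.inr ⟨by rw [ha, h, neg_zero], hb⟩
    · exact Or.inl ⟨ha, by rw [hb, h, neg_zero]⟩
  · have ha : ψ₁ = -φ₁ := eq_neg_of_add_eq_zero_left a
    have hb : ψ₂ = φ₂ := sub_eq_zero.1 b
    have h0 : φ₁ * φ₂ = 0 := by
      have := h3; rw [ha, hb] at this; linear_combination this / 2
    rcases mul_eq_zero.1 h0 with h | h
    · exact Or.inl ⟨by rw [ha, h, neg_zero], hb⟩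
    · exact Or.inr ⟨ha, by rw [hb, h, neg_zero]⟩
  · exact Or.inr ⟨eq_neg_of_add_eq_zero_left a, eq_neg_of_add_eq_zero_left b⟩
end

section
/- Let φ : ℝ → ℂ² be a differentiable curve of unit spinors (conj(φ(s))ᵗφ(s) = 1 for all s), let κ, μ : ℝ → ℝ be functions, and define T, N, B : ℝ → ℝ³ by N(s) + iB(s) = φ(s)ᵗσφ(s) = (φ₁² − φ₂², i(φ₁² + φ₂²), −2φ₁φ₂) (componentwise real and imaginary parts) and T(s) = −φ̂(s)ᵗσφ(s) = (φ₁·conj(φ₂) + conj(φ₁)·φ₂, i(conj(φ₂)φ₁ − conj(φ₁)φ₂), |φ₁|² − |φ₂|²). Then the Frenet-type equations T′ = κN, N′ = −κT + μB, B′ = −μN hold for all s if and only if the single spinor equation φ′(s) = −i(μ(s)/2)·φ(s) + (κ(s)/2)·φ̂(s) holds for all s. (Applied to an arc-length curve in a three-dimensional Lie group G with bi-invariant metric, with μ = τ − τ_G, this is the spinor form of the Frenet equations in G.) -/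
open Complex

private lemma hasDerivAt_re' {f : ℝ → ℂ} {f' : ℂ} {s : ℝ} (hf : HasDerivAt f f' s) :
    HasDerivAt (fun t => (f t).re) f'.re s :=
  Complex.reCLM.hasFDerivAt.comp_hasDerivAt s hf

private lemma hasDerivAt_im' {f : ℝ → ℂ} {f' : ℂ} {s : ℝ} (hf : HasDerivAt f f' s) :
    HasDerivAt (fun t => (f t).im) f'.im s :=
  Complex.imCLM.hasFDerivAt.comp_hasDerivAt s hf

private lemma hasDerivAt_conj' {f : ℝ → ℂ} {f' : ℂ} {s : ℝ} (hf : HasDerivAt f f' s) :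
    HasDerivAt (fun t => (starRingEnd ℂ) (f t)) ((starRingEnd ℂ) f') s := by
  have h := Complex.conjCLE.toContinuousLinearMap.hasFDerivAt.comp_hasDerivAt s hf
  exact h

private lemma derivNB {N B : ℝ → Fin 3 → ℝ} {Z : ℝ → ℂ} {Z' : ℂ} {s : ℝ} {i : Fin 3}
    (hZ : HasDerivAt Z Z' s)
    (h : ∀ t, ((N t i : ℝ) : ℂ) + Complex.I * ((B t i : ℝ) : ℂ) = Z t) :
    HasDerivAt (fun t => N t i) Z'.re s ∧ HasDerivAt (fun t => B t i) Z'.im s := by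
  have hre : (fun t => N t i) = fun t => (Z t).re := funext fun t => by
    simpa using congrArg Complex.re (h t)
  have him : (fun t => B t i) = fun t => (Z t).im := funext fun t => by
    simpa using congrArg Complex.im (h t)
  exact ⟨hre ▸ hasDerivAt_re' hZ, him ▸ hasDerivAt_im' hZ⟩

private lemma derivT' {T : ℝ → Fin 3 → ℝ} {W : ℝ → ℂ} {W' : ℂ} {s : ℝ} {i : Fin 3}
    (hW : HasDerivAt W W' s) (h : ∀ t, ((T t i : ℝ) : ℂ) = W t) :
    HasDerivAt (fun t => T t i) W'.re s := by
  have hre : (fun t => T t i) = fun t => (W t).re := funext fun t => by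
    simpa using congrArg Complex.re (h t)
  exact hre ▸ hasDerivAt_re' hW

private lemma abs_sq_cast (z : ℂ) :
    ((‖z‖ ^ 2 : ℝ) : ℂ) = z * (starRingEnd ℂ) z := by
  rw [Complex.sq_norm]; exact (Complex.mul_conj z).symm

private lemma core_alg (p q A Bc : ℂ) (k m : ℝ)
    (hu : (starRingEnd ℂ) p * p + (starRingEnd ℂ) q * q = 1)
    (e0 : 2*p*A - 2*q*Bc
        = -I*(m:ℂ)*(p^2-q^2) - (k:ℂ)*(p*(starRingEnd ℂ) q + (starRingEnd ℂ) p*q))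
    (e1 : I*(2*p*A) + I*(2*q*Bc)
        = -I*(m:ℂ)*(I*(p^2+q^2)) - (k:ℂ)*(I*((starRingEnd ℂ) q*p - (starRingEnd ℂ) p*q)))
    (e2 : -2*(A*q) - 2*(p*Bc)
        = -I*(m:ℂ)*(-2*p*q) - (k:ℂ)*(p*(starRingEnd ℂ) p - q*(starRingEnd ℂ) q)) :
    A = -I*((m:ℂ)/2)*p + ((k:ℂ)/2)*(-(starRingEnd ℂ) q) ∧
    Bc = -I*((m:ℂ)/2)*q + ((k:ℂ)/2)*((starRingEnd ℂ) p) := by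
  set cp := (starRingEnd ℂ) p with hcp
  set cq := (starRingEnd ℂ) q with hcq
  have e1' : 2*p*A + 2*q*Bc = -I*(m:ℂ)*(p^2+q^2) - (k:ℂ)*(cq*p - cp*q) :=
    mul_left_cancel₀ I_ne_zero (by linear_combination e1)
  set X := 2*A + I*(m:ℂ)*p + (k:ℂ)*cq with hX
  set Y := 2*Bc + I*(m:ℂ)*q - (k:ℂ)*cp with hY
  have hpX : p * X = 0 := by linear_combination e0/2 + e1'/2
  have hqY : q * Y = 0 := by linear_combination e1'/2 - e0/2
  have hsum : q * X + p * Y = 0 := by linear_combination -e2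
  have hXY : X = -(cq * p) * Y := by
    linear_combination cp * hpX + cq * hsum - X * hu
  have hYX : Y = -(cp * q) * X := by
    linear_combination cq * hqY + cp * hsum - Y * hu
  have hfac : X * (1 - (p*cp) * (q*cq)) = 0 := by
    linear_combination hXY - (cq*p) * hYX
  have hne : (1 - (p*cp) * (q*cq)) ≠ 0 := by
    have h1 : p * cp = ((normSq p : ℝ) : ℂ) := by rw [hcp, Complex.mul_conj]
    have h2 : q * cq = ((normSq q : ℝ) : ℂ) := by rw [hcq, Complex.mul_conj]
    have hsum1 : (normSq p : ℝ) + normSq q = 1 := by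
      have h3 : ((normSq p : ℝ) : ℂ) + ((normSq q : ℝ) : ℂ) = 1 := by
        rw [← h1, ← h2]; linear_combination hu
      exact_mod_cast h3
    rw [h1, h2]
    have : ((1 - normSq p * normSq q : ℝ) : ℂ) ≠ 0 := by
      rw [Complex.ofReal_ne_zero]
      nlinarith [normSq_nonneg p, normSq_nonneg q]
    simpa using this
  have hX0 : X = 0 := by
    rcases mul_eq_zero.mp hfac with h | h
    · exact h
    · exact absurd h hne
  have hY0 : Y = 0 := by rw [hYX, hX0]; ring
  constructor
  · linear_combination hX0/2
  · linear_combination hY0/2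

/-- Spinor form of the Frenet equations in a three-dimensional
Lie group with bi-invariant metric. Let `φ = (φ₁, φ₂) : ℝ → ℂ²` be a
differentiable curve of unit spinors encoding the triad `(N, B, T)` via
`N + iB = φᵗσφ` and `T = −φ̂ᵗσφ`. Then the Frenet-type equations
`T′ = κN`, `N′ = −κT + μB`, `B′ = −μN` (with `μ = τ − τ_G`) hold iff the
single spinor equation `φ′ = −i(μ/2)φ + (κ/2)φ̂` holds. -/
theorem spinor_frenet_lie_group (φ₁ φ₂ : ℝ → ℂ) (κ μ : ℝ → ℝ)
    (T N B : ℝ → Fin 3 → ℝ)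
    (hd₁ : Differentiable ℝ φ₁) (hd₂ : Differentiable ℝ φ₂)
    (hunit : ∀ s, (starRingEnd ℂ) (φ₁ s) * φ₁ s + (starRingEnd ℂ) (φ₂ s) * φ₂ s = 1)
    (hNB : ∀ s i, (N s i : ℂ) + Complex.I * (B s i : ℂ) =
      ![φ₁ s ^ 2 - φ₂ s ^ 2, Complex.I * (φ₁ s ^ 2 + φ₂ s ^ 2),
        -2 * φ₁ s * φ₂ s] i)
    (hT : ∀ s i, (T s i : ℂ) =
      ![φ₁ s * (starRingEnd ℂ) (φ₂ s) + (starRingEnd ℂ) (φ₁ s) * φ₂ s,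
        Complex.I * ((starRingEnd ℂ) (φ₂ s) * φ₁ s - (starRingEnd ℂ) (φ₁ s) * φ₂ s),
        ((‖φ₁ s‖ ^ 2 - ‖φ₂ s‖ ^ 2 : ℝ) : ℂ)] i) :
    ((∀ s i, deriv (fun t => T t i) s = κ s * N s i) ∧
     (∀ s i, deriv (fun t => N t i) s = -(κ s) * T s i + μ s * B s i) ∧
     (∀ s i, deriv (fun t => B t i) s = -(μ s) * N s i)) ↔
    ((∀ s, deriv φ₁ s =
        -Complex.I * (μ s / 2) * φ₁ s + (κ s / 2) * (-(starRingEnd ℂ) (φ₂ s))) ∧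
     (∀ s, deriv φ₂ s =
        -Complex.I * (μ s / 2) * φ₂ s + (κ s / 2) * ((starRingEnd ℂ) (φ₁ s)))) := by
  have hNB0 : ∀ t, ((N t 0 : ℝ) : ℂ) + Complex.I * ((B t 0 : ℝ) : ℂ)
      = φ₁ t * φ₁ t - φ₂ t * φ₂ t := fun t => by
    have h := hNB t 0; simpa [pow_two] using h
  have hNB1 : ∀ t, ((N t 1 : ℝ) : ℂ) + Complex.I * ((B t 1 : ℝ) : ℂ)
      = Complex.I * (φ₁ t * φ₁ t + φ₂ t * φ₂ t) := fun t => by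
    have h := hNB t 1; simpa [pow_two] using h
  have hNB2 : ∀ t, ((N t 2 : ℝ) : ℂ) + Complex.I * ((B t 2 : ℝ) : ℂ)
      = -2 * φ₁ t * φ₂ t := fun t => by simpa using hNB t 2
  have hT0 : ∀ t, ((T t 0 : ℝ) : ℂ)
      = φ₁ t * (starRingEnd ℂ) (φ₂ t) + (starRingEnd ℂ) (φ₁ t) * φ₂ t :=
    fun t => by simpa using hT t 0
  have hT1 : ∀ t, ((T t 1 : ℝ) : ℂ)
      = Complex.I * ((starRingEnd ℂ) (φ₂ t) * φ₁ t - (starRingEnd ℂ) (φ₁ t) * φ₂ t) :=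
    fun t => by simpa using hT t 1
  have hT2 : ∀ t, ((T t 2 : ℝ) : ℂ)
      = φ₁ t * (starRingEnd ℂ) (φ₁ t) - φ₂ t * (starRingEnd ℂ) (φ₂ t) := fun t => by
    have h := hT t 2
    simp only [Matrix.cons_val_two, Matrix.tail_cons, Matrix.head_cons] at h
    rw [h, Complex.ofReal_sub, abs_sq_cast, abs_sq_cast]
  constructor
  · -- Frenet ⇒ spinor equation
    rintro ⟨hFT, hFN, hFB⟩
    have main : ∀ s,
        deriv φ₁ s = -Complex.I * ((μ s : ℂ) / 2) * φ₁ s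
            + ((κ s : ℂ) / 2) * (-(starRingEnd ℂ) (φ₂ s)) ∧
        deriv φ₂ s = -Complex.I * ((μ s : ℂ) / 2) * φ₂ s
            + ((κ s : ℂ) / 2) * ((starRingEnd ℂ) (φ₁ s)) := by
      intro s
      have hA : HasDerivAt φ₁ (deriv φ₁ s) s := (hd₁ s).hasDerivAt
      have hB : HasDerivAt φ₂ (deriv φ₂ s) s := (hd₂ s).hasDerivAt
      have hZ0 := (hA.mul hA).sub (hB.mul hB)
      have hZ1 := ((hA.mul hA).add (hB.mul hB)).const_mul Complex.I
      have hZ2 := (hA.const_mul (-2 : ℂ)).mul hB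
      have hD0 := derivNB hZ0 hNB0
      have hD1 := derivNB hZ1 hNB1
      have hD2 := derivNB hZ2 hNB2
      have key : ∀ (i : Fin 3) (Z' : ℂ),
          deriv (fun t => N t i) s = Z'.re → deriv (fun t => B t i) s = Z'.im →
          Z' = -Complex.I * (μ s : ℂ) * (((N s i : ℝ) : ℂ) + Complex.I * ((B s i : ℝ) : ℂ))
               - (κ s : ℂ) * ((T s i : ℝ) : ℂ) := by
        intro i Z' h1 h2
        have hn := hFN s i
        have hb := hFB s i
        rw [h1] at hn
        rw [h2] at hb
        apply Complex.ext
        · simp only [Complex.sub_re, Complex.mul_re, Complex.mul_im, Complex.add_re,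
            Complex.add_im, Complex.neg_re, Complex.neg_im, Complex.I_re, Complex.I_im,
            Complex.ofReal_re, Complex.ofReal_im]
          rw [hn]; ring
        · simp only [Complex.sub_im, Complex.mul_re, Complex.mul_im, Complex.add_re,
            Complex.add_im, Complex.neg_re, Complex.neg_im, Complex.I_re, Complex.I_im,
            Complex.ofReal_re, Complex.ofReal_im]
          rw [hb]; ring
      have e0 := key 0 _ hD0.1.deriv hD0.2.deriv
      have e1 := key 1 _ hD1.1.deriv hD1.2.deriv
      have e2 := key 2 _ hD2.1.deriv hD2.2.deriv
      rw [hNB0 s, hT0 s] at e0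
      rw [hNB1 s, hT1 s] at e1
      rw [hNB2 s, hT2 s] at e2
      exact core_alg (φ₁ s) (φ₂ s) (deriv φ₁ s) (deriv φ₂ s) (κ s) (μ s) (hunit s)
        (by linear_combination e0) (by linear_combination e1) (by linear_combination e2)
    exact ⟨fun s => (main s).1, fun s => (main s).2⟩
  · -- spinor equation ⇒ Frenet
    rintro ⟨hs1, hs2⟩
    have master : ∀ s (i : Fin 3),
        deriv (fun t => T t i) s = κ s * N s i ∧
        deriv (fun t => N t i) s = -(κ s) * T s i + μ s * B s i ∧
        deriv (fun t => B t i) s = -(μ s) * N s i := by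
      intro s i
      have hA : HasDerivAt φ₁ (deriv φ₁ s) s := (hd₁ s).hasDerivAt
      have hB : HasDerivAt φ₂ (deriv φ₂ s) s := (hd₂ s).hasDerivAt
      have hcA := hasDerivAt_conj' hA
      have hcB := hasDerivAt_conj' hB
      have hZ0 := (hA.mul hA).sub (hB.mul hB)
      have hZ1 := ((hA.mul hA).add (hB.mul hB)).const_mul Complex.I
      have hZ2 := (hA.const_mul (-2 : ℂ)).mul hB
      have hW0 := (hA.mul hcB).add (hcA.mul hB)
      have hW1 := ((hcB.mul hA).sub (hcA.mul hB)).const_mul Complex.I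
      have hW2 := (hA.mul hcA).sub (hB.mul hcB)
      have ha := hs1 s
      have hb := hs2 s
      have hca : (starRingEnd ℂ) (deriv φ₁ s)
          = Complex.I * ((μ s : ℂ) / 2) * (starRingEnd ℂ) (φ₁ s)
            + ((κ s : ℂ) / 2) * (-(φ₂ s)) := by
        rw [ha]
        simp only [map_add, map_mul, map_neg, map_div₀, Complex.conj_I,
          Complex.conj_ofReal, Complex.conj_conj, map_ofNat]
        ring
      have hcb : (starRingEnd ℂ) (deriv φ₂ s)
          = Complex.I * ((μ s : ℂ) / 2) * (starRingEnd ℂ) (φ₂ s)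
            + ((κ s : ℂ) / 2) * (φ₁ s) := by
        rw [hb]
        simp only [map_add, map_mul, map_neg, map_div₀, Complex.conj_I,
          Complex.conj_ofReal, Complex.conj_conj, map_ofNat]
        ring
      fin_cases i
      · -- i = 0
        have hD := derivNB hZ0 hNB0
        have hDT := derivT' hW0 hT0
        have hNc := congrArg (starRingEnd ℂ) (hNB0 s)
        simp only [map_add, map_sub, map_mul, map_neg, map_ofNat, Complex.conj_conj,
          Complex.conj_I, Complex.conj_ofReal] at hNc
        have keyZ : deriv φ₁ s * φ₁ s + φ₁ s * deriv φ₁ s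
              - (deriv φ₂ s * φ₂ s + φ₂ s * deriv φ₂ s)
            = -Complex.I * (μ s : ℂ) * (((N s 0 : ℝ) : ℂ) + Complex.I * ((B s 0 : ℝ) : ℂ))
              - (κ s : ℂ) * ((T s 0 : ℝ) : ℂ) := by
          rw [hNB0 s, hT0 s, ha, hb]; ring
        have keyW : deriv φ₁ s * (starRingEnd ℂ) (φ₂ s) + φ₁ s * (starRingEnd ℂ) (deriv φ₂ s)
              + ((starRingEnd ℂ) (deriv φ₁ s) * φ₂ s + (starRingEnd ℂ) (φ₁ s) * deriv φ₂ s)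
            = ((κ s : ℝ) : ℂ) * ((N s 0 : ℝ) : ℂ) := by
          rw [hca, hcb, ha, hb]
          linear_combination (-(((κ s : ℝ) : ℂ))/2) * (hNB0 s) + (-(((κ s : ℝ) : ℂ))/2) * hNc
        refine ⟨hDT.deriv.trans ?_, hD.1.deriv.trans ?_, hD.2.deriv.trans ?_⟩
        · rw [keyW]
          simp [← Complex.ofReal_mul]
        · rw [keyZ]
          simp only [Complex.sub_re, Complex.mul_re, Complex.mul_im, Complex.add_re,
            Complex.add_im, Complex.neg_re, Complex.neg_im, Complex.I_re, Complex.I_im,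
            Complex.ofReal_re, Complex.ofReal_im]
          ring_nf
          exact rfl
        · rw [keyZ]
          simp only [Complex.sub_im, Complex.mul_re, Complex.mul_im, Complex.add_re,
            Complex.add_im, Complex.neg_re, Complex.neg_im, Complex.I_re, Complex.I_im,
            Complex.ofReal_re, Complex.ofReal_im]
          ring_nf
          exact rfl
      · -- i = 1
        have hD := derivNB hZ1 hNB1
        have hDT := derivT' hW1 hT1
        have hNc := congrArg (starRingEnd ℂ) (hNB1 s)
        simp only [map_add, map_sub, map_mul, map_neg, map_ofNat, Complex.conj_conj,
          Complex.conj_I, Complex.conj_ofReal] at hNc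
        have keyZ : Complex.I * (deriv φ₁ s * φ₁ s + φ₁ s * deriv φ₁ s
              + (deriv φ₂ s * φ₂ s + φ₂ s * deriv φ₂ s))
            = -Complex.I * (μ s : ℂ) * (((N s 1 : ℝ) : ℂ) + Complex.I * ((B s 1 : ℝ) : ℂ))
              - (κ s : ℂ) * ((T s 1 : ℝ) : ℂ) := by
          rw [hNB1 s, hT1 s, ha, hb]; ring
        have keyW : Complex.I * ((starRingEnd ℂ) (deriv φ₂ s) * φ₁ s
              + (starRingEnd ℂ) (φ₂ s) * deriv φ₁ s
              - ((starRingEnd ℂ) (deriv φ₁ s) * φ₂ s + (starRingEnd ℂ) (φ₁ s) * deriv φ₂ s))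
            = ((κ s : ℝ) : ℂ) * ((N s 1 : ℝ) : ℂ) := by
          rw [hca, hcb, ha, hb]
          linear_combination (-(((κ s : ℝ) : ℂ))/2) * (hNB1 s) + (-(((κ s : ℝ) : ℂ))/2) * hNc
        refine ⟨hDT.deriv.trans ?_, hD.1.deriv.trans ?_, hD.2.deriv.trans ?_⟩
        · rw [keyW]
          simp [← Complex.ofReal_mul]
        · rw [keyZ]
          simp only [Complex.sub_re, Complex.mul_re, Complex.mul_im, Complex.add_re,
            Complex.add_im, Complex.neg_re, Complex.neg_im, Complex.I_re, Complex.I_im,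
            Complex.ofReal_re, Complex.ofReal_im]
          ring_nf
          exact rfl
        · rw [keyZ]
          simp only [Complex.sub_im, Complex.mul_re, Complex.mul_im, Complex.add_re,
            Complex.add_im, Complex.neg_re, Complex.neg_im, Complex.I_re, Complex.I_im,
            Complex.ofReal_re, Complex.ofReal_im]
          ring_nf
          exact rfl
      · -- i = 2
        have hD := derivNB hZ2 hNB2
        have hDT := derivT' hW2 hT2
        have hNc := congrArg (starRingEnd ℂ) (hNB2 s)
        simp only [map_add, map_sub, map_mul, map_neg, map_ofNat, Complex.conj_conj,
          Complex.conj_I, Complex.conj_ofReal] at hNc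
        have keyZ : (-2 : ℂ) * deriv φ₁ s * φ₂ s + -2 * φ₁ s * deriv φ₂ s
            = -Complex.I * (μ s : ℂ) * (((N s 2 : ℝ) : ℂ) + Complex.I * ((B s 2 : ℝ) : ℂ))
              - (κ s : ℂ) * ((T s 2 : ℝ) : ℂ) := by
          rw [hNB2 s, hT2 s, ha, hb]; ring
        have keyW : deriv φ₁ s * (starRingEnd ℂ) (φ₁ s) + φ₁ s * (starRingEnd ℂ) (deriv φ₁ s)
              - (deriv φ₂ s * (starRingEnd ℂ) (φ₂ s) + φ₂ s * (starRingEnd ℂ) (deriv φ₂ s))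
            = ((κ s : ℝ) : ℂ) * ((N s 2 : ℝ) : ℂ) := by
          rw [hca, hcb, ha, hb]
          linear_combination (-(((κ s : ℝ) : ℂ))/2) * (hNB2 s) + (-(((κ s : ℝ) : ℂ))/2) * hNc
        refine ⟨hDT.deriv.trans ?_, hD.1.deriv.trans ?_, hD.2.deriv.trans ?_⟩
        · rw [keyW]
          simp [← Complex.ofReal_mul]
        · rw [keyZ]
          simp only [Complex.sub_re, Complex.mul_re, Complex.mul_im, Complex.add_re,
            Complex.add_im, Complex.neg_re, Complex.neg_im, Complex.I_re, Complex.I_im,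
            Complex.ofReal_re, Complex.ofReal_im]
          ring_nf
          exact rfl
        · rw [keyZ]
          simp only [Complex.sub_im, Complex.mul_re, Complex.mul_im, Complex.add_re,
            Complex.add_im, Complex.neg_re, Complex.neg_im, Complex.I_re, Complex.I_im,
            Complex.ofReal_re, Complex.ofReal_im]
          ring_nf
          exact rfl
    exact ⟨fun s i => (master s i).1, fun s i => (master s i).2.1,
      fun s i => (master s i).2.2⟩
end

section
/- Let φ : ℝ → ℂ² be a differentiable curve of unit spinors (conj(φ(s))ᵗφ(s) = 1 for all s), let κ, τ : ℝ → ℝ be functions, and define T, N, B : ℝ → ℝ³ by N(s) + iB(s) = φ(s)ᵗσφ(s) and T(s) = −φ̂(s)ᵗσφ(s). Then the Frenet equations of an arc-length curve in an Abelian three-dimensional Lie group (where τ_G = 0), namely T′ = κN, N′ = −κT + τB, B′ = −τN, hold for all s if and only if φ′(s) = −i(τ(s)/2)·φ(s) + (κ(s)/2)·φ̂(s) for all s. This recovers the spinor Frenet equation of Del Castillo and Barrales in Euclidean 3-space. -/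
/-- Spinor Frenet equation in an Abelian three-dimensional Lie group (τ_G = 0): the Frenet equations T′ = κN, N′ = −κT + τB, B′ = −τN hold iff φ′ = −i(τ/2)φ + (κ/2)φ̂. This recovers the spinor Frenet equation of Del Castillo and Barrales in Euclidean 3-space. -/
theorem spinor_frenet_abelian (φ₁ φ₂ : ℝ → ℂ) (κ τ : ℝ → ℝ)
    (T N B : ℝ → Fin 3 → ℝ)
    (hd₁ : Differentiable ℝ φ₁) (hd₂ : Differentiable ℝ φ₂)
    (hunit : ∀ s, (starRingEnd ℂ) (φ₁ s) * φ₁ s + (starRingEnd ℂ) (φ₂ s) * φ₂ s = 1)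
    (hNB : ∀ s i, (N s i : ℂ) + Complex.I * (B s i : ℂ) =
      ![φ₁ s ^ 2 - φ₂ s ^ 2, Complex.I * (φ₁ s ^ 2 + φ₂ s ^ 2),
        -2 * φ₁ s * φ₂ s] i)
    (hT : ∀ s i, (T s i : ℂ) =
      ![φ₁ s * (starRingEnd ℂ) (φ₂ s) + (starRingEnd ℂ) (φ₁ s) * φ₂ s,
        Complex.I * ((starRingEnd ℂ) (φ₂ s) * φ₁ s - (starRingEnd ℂ) (φ₁ s) * φ₂ s),
        ((‖φ₁ s‖ ^ 2 - ‖φ₂ s‖ ^ 2 : ℝ) : ℂ)] i) :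
    ((∀ s i, deriv (fun t => T t i) s = κ s * N s i) ∧
     (∀ s i, deriv (fun t => N t i) s = -(κ s) * T s i + (τ s) * B s i) ∧
     (∀ s i, deriv (fun t => B t i) s = -(τ s) * N s i)) ↔
    ((∀ s, deriv φ₁ s =
        -Complex.I * ((τ s : ℝ) / 2) * φ₁ s + (κ s / 2) * (-(starRingEnd ℂ) (φ₂ s))) ∧
     (∀ s, deriv φ₂ s =
        -Complex.I * ((τ s : ℝ) / 2) * φ₂ s + (κ s / 2) * ((starRingEnd ℂ) (φ₁ s)))) := by
  have hre : ∀ (f : ℝ → ℂ) (f' : ℂ) (x : ℝ), HasDerivAt f f' x →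
      HasDerivAt (fun t => (f t).re) f'.re x := fun f f' x h =>
    Complex.reCLM.hasFDerivAt.comp_hasDerivAt x h
  have him : ∀ (f : ℝ → ℂ) (f' : ℂ) (x : ℝ), HasDerivAt f f' x →
      HasDerivAt (fun t => (f t).im) f'.im x := fun f f' x h =>
    Complex.imCLM.hasFDerivAt.comp_hasDerivAt x h
  -- pointwise descriptions of N, B, T
  have hNf0 : ∀ t, N t 0 = (φ₁ t ^ 2 - φ₂ t ^ 2).re := fun t => by
    simpa using congrArg Complex.re (hNB t 0)
  have hNf1 : ∀ t, N t 1 = (Complex.I * (φ₁ t ^ 2 + φ₂ t ^ 2)).re := fun t => by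
    simpa using congrArg Complex.re (hNB t 1)
  have hNf2 : ∀ t, N t 2 = (-2 * φ₁ t * φ₂ t).re := fun t => by
    simpa using congrArg Complex.re (hNB t 2)
  have hBf0 : ∀ t, B t 0 = (φ₁ t ^ 2 - φ₂ t ^ 2).im := fun t => by
    simpa using congrArg Complex.im (hNB t 0)
  have hBf1 : ∀ t, B t 1 = (Complex.I * (φ₁ t ^ 2 + φ₂ t ^ 2)).im := fun t => by
    simpa using congrArg Complex.im (hNB t 1)
  have hBf2 : ∀ t, B t 2 = (-2 * φ₁ t * φ₂ t).im := fun t => by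
    simpa using congrArg Complex.im (hNB t 2)
  have hTf0 : ∀ t, T t 0 = (φ₁ t * (starRingEnd ℂ) (φ₂ t) + (starRingEnd ℂ) (φ₁ t) * φ₂ t).re :=
    fun t => by simpa using congrArg Complex.re (hT t 0)
  have hTf1 : ∀ t, T t 1 = (Complex.I * ((starRingEnd ℂ) (φ₂ t) * φ₁ t
      - (starRingEnd ℂ) (φ₁ t) * φ₂ t)).re := fun t => by
    simpa using congrArg Complex.re (hT t 1)
  have hTf2 : ∀ t, T t 2 = ((starRingEnd ℂ) (φ₁ t) * φ₁ t
      - (starRingEnd ℂ) (φ₂ t) * φ₂ t).re := fun t => by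
    have := congrArg Complex.re (hT t 2)
    simp [Complex.sq_norm] at this ⊢
    rw [this]
    simp [Complex.normSq_apply, Complex.mul_re]
  -- coerced entries
  have hT0c : ∀ s, ((T s 0 : ℝ) : ℂ) = φ₁ s * (starRingEnd ℂ) (φ₂ s)
      + (starRingEnd ℂ) (φ₁ s) * φ₂ s := fun s => by simpa using hT s 0
  have hT1c : ∀ s, ((T s 1 : ℝ) : ℂ) = Complex.I * ((starRingEnd ℂ) (φ₂ s) * φ₁ s
      - (starRingEnd ℂ) (φ₁ s) * φ₂ s) := fun s => by simpa using hT s 1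
  have hT2c : ∀ s, ((T s 2 : ℝ) : ℂ) = (starRingEnd ℂ) (φ₁ s) * φ₁ s
      - (starRingEnd ℂ) (φ₂ s) * φ₂ s := fun s => by
    have := hT s 2
    simp [Complex.sq_norm] at this
    rw [this]
    push_cast
    rw [Complex.normSq_eq_conj_mul_self, Complex.normSq_eq_conj_mul_self]
  have hNB0c : ∀ s, ((N s 0 : ℝ) : ℂ) + Complex.I * ((B s 0 : ℝ) : ℂ)
      = φ₁ s ^ 2 - φ₂ s ^ 2 := fun s => by simpa using hNB s 0
  have hNB1c : ∀ s, ((N s 1 : ℝ) : ℂ) + Complex.I * ((B s 1 : ℝ) : ℂ)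
      = Complex.I * (φ₁ s ^ 2 + φ₂ s ^ 2) := fun s => by simpa using hNB s 1
  have hNB2c : ∀ s, ((N s 2 : ℝ) : ℂ) + Complex.I * ((B s 2 : ℝ) : ℂ)
      = -2 * φ₁ s * φ₂ s := fun s => by simpa using hNB s 2
  have key : ∀ s, ((∀ i, deriv (fun t => T t i) s = κ s * N s i) ∧
      (∀ i, deriv (fun t => N t i) s = -(κ s) * T s i + (τ s) * B s i) ∧
      (∀ i, deriv (fun t => B t i) s = -(τ s) * N s i)) ↔
      ((deriv φ₁ s =
        -Complex.I * ((τ s : ℝ) / 2) * φ₁ s + (κ s / 2) * (-(starRingEnd ℂ) (φ₂ s))) ∧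
       (deriv φ₂ s =
        -Complex.I * ((τ s : ℝ) / 2) * φ₂ s + (κ s / 2) * ((starRingEnd ℂ) (φ₁ s)))) := by
    intro s
    have hp : HasDerivAt φ₁ (deriv φ₁ s) s := (hd₁ s).hasDerivAt
    have hq : HasDerivAt φ₂ (deriv φ₂ s) s := (hd₂ s).hasDerivAt
    have hps : HasDerivAt (fun t => (starRingEnd ℂ) (φ₁ t)) ((starRingEnd ℂ) (deriv φ₁ s)) s :=
      hp.star
    have hqs : HasDerivAt (fun t => (starRingEnd ℂ) (φ₂ t)) ((starRingEnd ℂ) (deriv φ₂ s)) s :=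
      hq.star
    have hsq1 : HasDerivAt (fun t => φ₁ t ^ 2) (2 * φ₁ s * deriv φ₁ s) s := by
      have h : HasDerivAt (fun t => φ₁ t * φ₁ t) (deriv φ₁ s * φ₁ s + φ₁ s * deriv φ₁ s) s :=
        hp.mul hp
      rw [show (fun t => φ₁ t ^ 2) = fun t => φ₁ t * φ₁ t from funext fun t => sq (φ₁ t) ▸ rfl]
      convert h using 1
      ring
    have hsq2 : HasDerivAt (fun t => φ₂ t ^ 2) (2 * φ₂ s * deriv φ₂ s) s := by
      have h : HasDerivAt (fun t => φ₂ t * φ₂ t) (deriv φ₂ s * φ₂ s + φ₂ s * deriv φ₂ s) s :=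
        hq.mul hq
      rw [show (fun t => φ₂ t ^ 2) = fun t => φ₂ t * φ₂ t from funext fun t => sq (φ₂ t) ▸ rfl]
      convert h using 1
      ring
    have hF0 : HasDerivAt (fun t => φ₁ t ^ 2 - φ₂ t ^ 2)
        (2 * φ₁ s * deriv φ₁ s - 2 * φ₂ s * deriv φ₂ s) s := hsq1.sub hsq2
    have hF1 : HasDerivAt (fun t => Complex.I * (φ₁ t ^ 2 + φ₂ t ^ 2))
        (Complex.I * (2 * φ₁ s * deriv φ₁ s + 2 * φ₂ s * deriv φ₂ s)) s :=
      (hsq1.add hsq2).const_mul Complex.I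
    have hF2 : HasDerivAt (fun t => -2 * φ₁ t * φ₂ t)
        (-2 * (deriv φ₁ s * φ₂ s + φ₁ s * deriv φ₂ s)) s := by
      have : HasDerivAt (fun t => -2 * φ₁ t * φ₂ t) (-2 * deriv φ₁ s * φ₂ s + -2 * φ₁ s * deriv φ₂ s) s :=
        (hp.const_mul (-2 : ℂ)).mul hq
      convert this using 1
      ring
    have hG0 : HasDerivAt (fun t => φ₁ t * (starRingEnd ℂ) (φ₂ t) + (starRingEnd ℂ) (φ₁ t) * φ₂ t)
        (deriv φ₁ s * (starRingEnd ℂ) (φ₂ s) + φ₁ s * (starRingEnd ℂ) (deriv φ₂ s)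
          + ((starRingEnd ℂ) (deriv φ₁ s) * φ₂ s + (starRingEnd ℂ) (φ₁ s) * deriv φ₂ s)) s :=
      (hp.mul hqs).add (hps.mul hq)
    have hG1 : HasDerivAt (fun t => Complex.I * ((starRingEnd ℂ) (φ₂ t) * φ₁ t
        - (starRingEnd ℂ) (φ₁ t) * φ₂ t))
        (Complex.I * (((starRingEnd ℂ) (deriv φ₂ s) * φ₁ s + (starRingEnd ℂ) (φ₂ s) * deriv φ₁ s)
          - ((starRingEnd ℂ) (deriv φ₁ s) * φ₂ s + (starRingEnd ℂ) (φ₁ s) * deriv φ₂ s))) s :=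
      ((hqs.mul hp).sub (hps.mul hq)).const_mul Complex.I
    have hG2 : HasDerivAt (fun t => (starRingEnd ℂ) (φ₁ t) * φ₁ t - (starRingEnd ℂ) (φ₂ t) * φ₂ t)
        (((starRingEnd ℂ) (deriv φ₁ s) * φ₁ s + (starRingEnd ℂ) (φ₁ s) * deriv φ₁ s)
          - ((starRingEnd ℂ) (deriv φ₂ s) * φ₂ s + (starRingEnd ℂ) (φ₂ s) * deriv φ₂ s)) s :=
      (hps.mul hp).sub (hqs.mul hq)
    -- derivatives of the frame
    have hdT0 : deriv (fun t => T t 0) s = (deriv φ₁ s * (starRingEnd ℂ) (φ₂ s)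
        + φ₁ s * (starRingEnd ℂ) (deriv φ₂ s)
        + ((starRingEnd ℂ) (deriv φ₁ s) * φ₂ s + (starRingEnd ℂ) (φ₁ s) * deriv φ₂ s)).re := by
      rw [show (fun t => T t 0) = fun t => (φ₁ t * (starRingEnd ℂ) (φ₂ t)
        + (starRingEnd ℂ) (φ₁ t) * φ₂ t).re from funext hTf0]
      exact (hre _ _ _ hG0).deriv
    have hdT1 : deriv (fun t => T t 1) s = (Complex.I * (((starRingEnd ℂ) (deriv φ₂ s) * φ₁ s
        + (starRingEnd ℂ) (φ₂ s) * deriv φ₁ s)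
        - ((starRingEnd ℂ) (deriv φ₁ s) * φ₂ s + (starRingEnd ℂ) (φ₁ s) * deriv φ₂ s))).re := by
      rw [show (fun t => T t 1) = fun t => (Complex.I * ((starRingEnd ℂ) (φ₂ t) * φ₁ t
        - (starRingEnd ℂ) (φ₁ t) * φ₂ t)).re from funext hTf1]
      exact (hre _ _ _ hG1).deriv
    have hdT2 : deriv (fun t => T t 2) s = (((starRingEnd ℂ) (deriv φ₁ s) * φ₁ s
        + (starRingEnd ℂ) (φ₁ s) * deriv φ₁ s)
        - ((starRingEnd ℂ) (deriv φ₂ s) * φ₂ s + (starRingEnd ℂ) (φ₂ s) * deriv φ₂ s)).re := by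
      rw [show (fun t => T t 2) = fun t => ((starRingEnd ℂ) (φ₁ t) * φ₁ t
        - (starRingEnd ℂ) (φ₂ t) * φ₂ t).re from funext hTf2]
      exact (hre _ _ _ hG2).deriv
    have hdN0 : deriv (fun t => N t 0) s
        = (2 * φ₁ s * deriv φ₁ s - 2 * φ₂ s * deriv φ₂ s).re := by
      rw [show (fun t => N t 0) = fun t => (φ₁ t ^ 2 - φ₂ t ^ 2).re from funext hNf0]
      exact (hre _ _ _ hF0).deriv
    have hdN1 : deriv (fun t => N t 1) s
        = (Complex.I * (2 * φ₁ s * deriv φ₁ s + 2 * φ₂ s * deriv φ₂ s)).re := by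
      rw [show (fun t => N t 1) = fun t => (Complex.I * (φ₁ t ^ 2 + φ₂ t ^ 2)).re
        from funext hNf1]
      exact (hre _ _ _ hF1).deriv
    have hdN2 : deriv (fun t => N t 2) s
        = (-2 * (deriv φ₁ s * φ₂ s + φ₁ s * deriv φ₂ s)).re := by
      rw [show (fun t => N t 2) = fun t => (-2 * φ₁ t * φ₂ t).re from funext hNf2]
      exact (hre _ _ _ hF2).deriv
    have hdB0 : deriv (fun t => B t 0) s
        = (2 * φ₁ s * deriv φ₁ s - 2 * φ₂ s * deriv φ₂ s).im := by
      rw [show (fun t => B t 0) = fun t => (φ₁ t ^ 2 - φ₂ t ^ 2).im from funext hBf0]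
      exact (him _ _ _ hF0).deriv
    have hdB1 : deriv (fun t => B t 1) s
        = (Complex.I * (2 * φ₁ s * deriv φ₁ s + 2 * φ₂ s * deriv φ₂ s)).im := by
      rw [show (fun t => B t 1) = fun t => (Complex.I * (φ₁ t ^ 2 + φ₂ t ^ 2)).im
        from funext hBf1]
      exact (him _ _ _ hF1).deriv
    have hdB2 : deriv (fun t => B t 2) s
        = (-2 * (deriv φ₁ s * φ₂ s + φ₁ s * deriv φ₂ s)).im := by
      rw [show (fun t => B t 2) = fun t => (-2 * φ₁ t * φ₂ t).im from funext hBf2]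
      exact (him _ _ _ hF2).deriv
    constructor
    · rintro ⟨-, hN', hB'⟩
      have E0 : 2 * φ₁ s * deriv φ₁ s - 2 * φ₂ s * deriv φ₂ s
          = -((κ s : ℝ) : ℂ) * (φ₁ s * (starRingEnd ℂ) (φ₂ s) + (starRingEnd ℂ) (φ₁ s) * φ₂ s)
            - Complex.I * ((τ s : ℝ) : ℂ) * (φ₁ s ^ 2 - φ₂ s ^ 2) := by
        calc 2 * φ₁ s * deriv φ₁ s - 2 * φ₂ s * deriv φ₂ s
            = ((2 * φ₁ s * deriv φ₁ s - 2 * φ₂ s * deriv φ₂ s).re : ℂ)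
              + ((2 * φ₁ s * deriv φ₁ s - 2 * φ₂ s * deriv φ₂ s).im : ℂ) * Complex.I := (Complex.re_add_im _).symm
          _ = ((-(κ s) * T s 0 + τ s * B s 0 : ℝ) : ℂ)
              + ((-(τ s) * N s 0 : ℝ) : ℂ) * Complex.I := by
              rw [show (2 * φ₁ s * deriv φ₁ s - 2 * φ₂ s * deriv φ₂ s).re = -(κ s) * T s 0 + τ s * B s 0 from by
                rw [← hdN0]; exact hN' 0]
              rw [show (2 * φ₁ s * deriv φ₁ s - 2 * φ₂ s * deriv φ₂ s).im = -(τ s) * N s 0 from by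
                rw [← hdB0]; exact hB' 0]
          _ = _ := by
              push_cast
              linear_combination (-((κ s : ℝ) : ℂ)) * hT0c s
                - Complex.I * ((τ s : ℝ) : ℂ) * hNB0c s
                + ((τ s : ℝ) : ℂ) * ((B s 0 : ℝ) : ℂ) * Complex.I_sq
      have E1 : Complex.I * (2 * φ₁ s * deriv φ₁ s + 2 * φ₂ s * deriv φ₂ s)
          = -((κ s : ℝ) : ℂ) * (Complex.I * ((starRingEnd ℂ) (φ₂ s) * φ₁ s - (starRingEnd ℂ) (φ₁ s) * φ₂ s))
            - Complex.I * ((τ s : ℝ) : ℂ) * (Complex.I * (φ₁ s ^ 2 + φ₂ s ^ 2)) := by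
        calc Complex.I * (2 * φ₁ s * deriv φ₁ s + 2 * φ₂ s * deriv φ₂ s)
            = ((Complex.I * (2 * φ₁ s * deriv φ₁ s + 2 * φ₂ s * deriv φ₂ s)).re : ℂ)
              + ((Complex.I * (2 * φ₁ s * deriv φ₁ s + 2 * φ₂ s * deriv φ₂ s)).im : ℂ) * Complex.I := (Complex.re_add_im _).symm
          _ = ((-(κ s) * T s 1 + τ s * B s 1 : ℝ) : ℂ)
              + ((-(τ s) * N s 1 : ℝ) : ℂ) * Complex.I := by
              rw [show (Complex.I * (2 * φ₁ s * deriv φ₁ s + 2 * φ₂ s * deriv φ₂ s)).re = -(κ s) * T s 1 + τ s * B s 1 from by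
                rw [← hdN1]; exact hN' 1]
              rw [show (Complex.I * (2 * φ₁ s * deriv φ₁ s + 2 * φ₂ s * deriv φ₂ s)).im = -(τ s) * N s 1 from by
                rw [← hdB1]; exact hB' 1]
          _ = _ := by
              push_cast
              linear_combination (-((κ s : ℝ) : ℂ)) * hT1c s
                - Complex.I * ((τ s : ℝ) : ℂ) * hNB1c s
                + ((τ s : ℝ) : ℂ) * ((B s 1 : ℝ) : ℂ) * Complex.I_sq
      have E2 : -2 * (deriv φ₁ s * φ₂ s + φ₁ s * deriv φ₂ s)
          = -((κ s : ℝ) : ℂ) * ((starRingEnd ℂ) (φ₁ s) * φ₁ s - (starRingEnd ℂ) (φ₂ s) * φ₂ s)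
            - Complex.I * ((τ s : ℝ) : ℂ) * (-2 * φ₁ s * φ₂ s) := by
        calc -2 * (deriv φ₁ s * φ₂ s + φ₁ s * deriv φ₂ s)
            = ((-2 * (deriv φ₁ s * φ₂ s + φ₁ s * deriv φ₂ s)).re : ℂ)
              + ((-2 * (deriv φ₁ s * φ₂ s + φ₁ s * deriv φ₂ s)).im : ℂ) * Complex.I := (Complex.re_add_im _).symm
          _ = ((-(κ s) * T s 2 + τ s * B s 2 : ℝ) : ℂ)
              + ((-(τ s) * N s 2 : ℝ) : ℂ) * Complex.I := by
              rw [show (-2 * (deriv φ₁ s * φ₂ s + φ₁ s * deriv φ₂ s)).re = -(κ s) * T s 2 + τ s * B s 2 from by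
                rw [← hdN2]; exact hN' 2]
              rw [show (-2 * (deriv φ₁ s * φ₂ s + φ₁ s * deriv φ₂ s)).im = -(τ s) * N s 2 from by
                rw [← hdB2]; exact hB' 2]
          _ = _ := by
              push_cast
              linear_combination (-((κ s : ℝ) : ℂ)) * hT2c s
                - Complex.I * ((τ s : ℝ) : ℂ) * hNB2c s
                + ((τ s : ℝ) : ℂ) * ((B s 2 : ℝ) : ℂ) * Complex.I_sq
      have h1 := hunit s
      have E1' : 2 * φ₁ s * deriv φ₁ s + 2 * φ₂ s * deriv φ₂ s
          = -((κ s : ℝ) : ℂ) * ((starRingEnd ℂ) (φ₂ s) * φ₁ s - (starRingEnd ℂ) (φ₁ s) * φ₂ s)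
            - Complex.I * ((τ s : ℝ) : ℂ) * (φ₁ s ^ 2 + φ₂ s ^ 2) := by
        linear_combination (-Complex.I) * E1
          + (2 * φ₁ s * deriv φ₁ s + 2 * φ₂ s * deriv φ₂ s
            + ((κ s : ℝ) : ℂ) * ((starRingEnd ℂ) (φ₂ s) * φ₁ s - (starRingEnd ℂ) (φ₁ s) * φ₂ s)
            + Complex.I * ((τ s : ℝ) : ℂ) * (φ₁ s ^ 2 + φ₂ s ^ 2)) * Complex.I_sq
      have hx : φ₁ s * (deriv φ₁ s - (-Complex.I * (((τ s : ℝ) : ℂ) / 2) * φ₁ s + ((κ s : ℝ) : ℂ) / 2 * (-(starRingEnd ℂ) (φ₂ s)))) = 0 := by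
        linear_combination E0 / 4 + E1' / 4
      have hy : φ₂ s * (deriv φ₂ s - (-Complex.I * (((τ s : ℝ) : ℂ) / 2) * φ₂ s + ((κ s : ℝ) : ℂ) / 2 * ((starRingEnd ℂ) (φ₁ s)))) = 0 := by
        linear_combination (-1/4 : ℂ) * E0 + E1' / 4
      have hsum : φ₂ s * (deriv φ₁ s - (-Complex.I * (((τ s : ℝ) : ℂ) / 2) * φ₁ s + ((κ s : ℝ) : ℂ) / 2 * (-(starRingEnd ℂ) (φ₂ s)))) + φ₁ s * (deriv φ₂ s - (-Complex.I * (((τ s : ℝ) : ℂ) / 2) * φ₂ s + ((κ s : ℝ) : ℂ) / 2 * ((starRingEnd ℂ) (φ₁ s)))) = 0 := by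
        linear_combination (-1/2 : ℂ) * E2
      have s1 : φ₂ s * (deriv φ₁ s - (-Complex.I * (((τ s : ℝ) : ℂ) / 2) * φ₁ s + ((κ s : ℝ) : ℂ) / 2 * (-(starRingEnd ℂ) (φ₂ s)))) = -(φ₁ s * (deriv φ₂ s - (-Complex.I * (((τ s : ℝ) : ℂ) / 2) * φ₂ s + ((κ s : ℝ) : ℂ) / 2 * ((starRingEnd ℂ) (φ₁ s))))) := by
        linear_combination hsum
      have s2 : deriv φ₁ s - (-Complex.I * (((τ s : ℝ) : ℂ) / 2) * φ₁ s + ((κ s : ℝ) : ℂ) / 2 * (-(starRingEnd ℂ) (φ₂ s))) = -((starRingEnd ℂ) (φ₂ s) * (φ₁ s * (deriv φ₂ s - (-Complex.I * (((τ s : ℝ) : ℂ) / 2) * φ₂ s + ((κ s : ℝ) : ℂ) / 2 * ((starRingEnd ℂ) (φ₁ s)))))) := by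
        linear_combination (starRingEnd ℂ) (φ₁ s) * hx + (starRingEnd ℂ) (φ₂ s) * s1 - (deriv φ₁ s - (-Complex.I * (((τ s : ℝ) : ℂ) / 2) * φ₁ s + ((κ s : ℝ) : ℂ) / 2 * (-(starRingEnd ℂ) (φ₂ s)))) * h1
      have s3 : deriv φ₂ s - (-Complex.I * (((τ s : ℝ) : ℂ) / 2) * φ₂ s + ((κ s : ℝ) : ℂ) / 2 * ((starRingEnd ℂ) (φ₁ s))) = (starRingEnd ℂ) (φ₁ s) * (φ₁ s * (deriv φ₂ s - (-Complex.I * (((τ s : ℝ) : ℂ) / 2) * φ₂ s + ((κ s : ℝ) : ℂ) / 2 * ((starRingEnd ℂ) (φ₁ s))))) := by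
        linear_combination (starRingEnd ℂ) (φ₂ s) * hy - (deriv φ₂ s - (-Complex.I * (((τ s : ℝ) : ℂ) / 2) * φ₂ s + ((κ s : ℝ) : ℂ) / 2 * ((starRingEnd ℂ) (φ₁ s)))) * h1
      have s5 : (deriv φ₂ s - (-Complex.I * (((τ s : ℝ) : ℂ) / 2) * φ₂ s + ((κ s : ℝ) : ℂ) / 2 * ((starRingEnd ℂ) (φ₁ s)))) * (1 - ((starRingEnd ℂ) (φ₁ s) * φ₁ s) * ((starRingEnd ℂ) (φ₂ s) * φ₂ s)) = 0 := by
        linear_combination s3 + (starRingEnd ℂ) (φ₁ s) * hsum - (starRingEnd ℂ) (φ₁ s) * φ₂ s * s2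
      have hn1 : Complex.normSq (φ₁ s) + Complex.normSq (φ₂ s) = 1 := by
        have h2 : ((Complex.normSq (φ₁ s) + Complex.normSq (φ₂ s) : ℝ) : ℂ) = 1 := by
          push_cast
          rw [Complex.normSq_eq_conj_mul_self, Complex.normSq_eq_conj_mul_self]
          exact h1
        exact_mod_cast h2
      have hne : (1 : ℂ) - ((starRingEnd ℂ) (φ₁ s) * φ₁ s) * ((starRingEnd ℂ) (φ₂ s) * φ₂ s) ≠ 0 := by
        rw [← Complex.normSq_eq_conj_mul_self, ← Complex.normSq_eq_conj_mul_self]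
        intro hc
        have hr : (1 : ℂ) = ((Complex.normSq (φ₁ s) * Complex.normSq (φ₂ s) : ℝ) : ℂ) := by
          push_cast
          linear_combination hc
        have hr' : (Complex.normSq (φ₁ s) * Complex.normSq (φ₂ s) : ℝ) = 1 := by
          exact_mod_cast hr.symm
        nlinarith [Complex.normSq_nonneg (φ₁ s), Complex.normSq_nonneg (φ₂ s), hn1]
      have hY : deriv φ₂ s - (-Complex.I * (((τ s : ℝ) : ℂ) / 2) * φ₂ s + ((κ s : ℝ) : ℂ) / 2 * ((starRingEnd ℂ) (φ₁ s))) = 0 := by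
        rcases mul_eq_zero.mp s5 with h | h
        · exact h
        · exact absurd h hne
      have hX : deriv φ₁ s - (-Complex.I * (((τ s : ℝ) : ℂ) / 2) * φ₁ s + ((κ s : ℝ) : ℂ) / 2 * (-(starRingEnd ℂ) (φ₂ s))) = 0 := by
        linear_combination s2 - (starRingEnd ℂ) (φ₂ s) * φ₁ s * hY
      constructor
      · linear_combination (norm := (push_cast; ring1)) hX
      · linear_combination (norm := (push_cast; ring1)) hY
    · rintro ⟨ha, hb⟩
      have ha' : (starRingEnd ℂ) (deriv φ₁ s)
          = Complex.I * (((τ s : ℝ) : ℂ) / 2) * (starRingEnd ℂ) (φ₁ s) - ((κ s : ℝ) : ℂ) / 2 * φ₂ s := by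
        rw [ha]
        simp only [map_add, map_mul, map_neg, map_div₀, Complex.conj_I, Complex.conj_ofReal,
          map_ofNat, Complex.conj_conj]
        push_cast
        ring
      have hb' : (starRingEnd ℂ) (deriv φ₂ s)
          = Complex.I * (((τ s : ℝ) : ℂ) / 2) * (starRingEnd ℂ) (φ₂ s) + ((κ s : ℝ) : ℂ) / 2 * φ₁ s := by
        rw [hb]
        simp only [map_add, map_mul, map_neg, map_div₀, Complex.conj_I, Complex.conj_ofReal,
          map_ofNat, Complex.conj_conj]
        push_cast
        ring
      have hNc0 : ((N s 0 : ℝ) : ℂ)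
          = ((φ₁ s ^ 2 - φ₂ s ^ 2) + (starRingEnd ℂ) (φ₁ s ^ 2 - φ₂ s ^ 2)) / 2 := by
        rw [hNf0 s, Complex.re_eq_add_conj]
      have hcT0 : deriv φ₁ s * (starRingEnd ℂ) (φ₂ s) + φ₁ s * (starRingEnd ℂ) (deriv φ₂ s) + ((starRingEnd ℂ) (deriv φ₁ s) * φ₂ s + (starRingEnd ℂ) (φ₁ s) * deriv φ₂ s) = ((κ s * N s 0 : ℝ) : ℂ) := by
        rw [ha', hb', ha, hb]
        push_cast
        rw [hNc0]
        simp only [map_sub, map_add, map_mul, map_pow, map_neg, map_ofNat, Complex.conj_I,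
          Complex.conj_conj, Complex.conj_ofReal]
        push_cast
        ring
      have hcc0 : 2 * φ₁ s * deriv φ₁ s - 2 * φ₂ s * deriv φ₂ s
          = ((-(κ s) * T s 0 + τ s * B s 0 : ℝ) : ℂ)
            + ((-(τ s) * N s 0 : ℝ) : ℂ) * Complex.I := by
        rw [ha, hb]
        push_cast
        linear_combination ((κ s : ℝ) : ℂ) * hT0c s
          + Complex.I * ((τ s : ℝ) : ℂ) * hNB0c s
          - ((τ s : ℝ) : ℂ) * ((B s 0 : ℝ) : ℂ) * Complex.I_sq
      have hNc1 : ((N s 1 : ℝ) : ℂ)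
          = ((Complex.I * (φ₁ s ^ 2 + φ₂ s ^ 2)) + (starRingEnd ℂ) (Complex.I * (φ₁ s ^ 2 + φ₂ s ^ 2))) / 2 := by
        rw [hNf1 s, Complex.re_eq_add_conj]
      have hcT1 : Complex.I * (((starRingEnd ℂ) (deriv φ₂ s) * φ₁ s + (starRingEnd ℂ) (φ₂ s) * deriv φ₁ s) - ((starRingEnd ℂ) (deriv φ₁ s) * φ₂ s + (starRingEnd ℂ) (φ₁ s) * deriv φ₂ s)) = ((κ s * N s 1 : ℝ) : ℂ) := by
        rw [ha', hb', ha, hb]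
        push_cast
        rw [hNc1]
        simp only [map_sub, map_add, map_mul, map_pow, map_neg, map_ofNat, Complex.conj_I,
          Complex.conj_conj, Complex.conj_ofReal]
        push_cast
        ring
      have hcc1 : Complex.I * (2 * φ₁ s * deriv φ₁ s + 2 * φ₂ s * deriv φ₂ s)
          = ((-(κ s) * T s 1 + τ s * B s 1 : ℝ) : ℂ)
            + ((-(τ s) * N s 1 : ℝ) : ℂ) * Complex.I := by
        rw [ha, hb]
        push_cast
        linear_combination ((κ s : ℝ) : ℂ) * hT1c s
          + Complex.I * ((τ s : ℝ) : ℂ) * hNB1c s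
          - ((τ s : ℝ) : ℂ) * ((B s 1 : ℝ) : ℂ) * Complex.I_sq
      have hNc2 : ((N s 2 : ℝ) : ℂ)
          = ((-2 * φ₁ s * φ₂ s) + (starRingEnd ℂ) (-2 * φ₁ s * φ₂ s)) / 2 := by
        rw [hNf2 s, Complex.re_eq_add_conj]
      have hcT2 : ((starRingEnd ℂ) (deriv φ₁ s) * φ₁ s + (starRingEnd ℂ) (φ₁ s) * deriv φ₁ s) - ((starRingEnd ℂ) (deriv φ₂ s) * φ₂ s + (starRingEnd ℂ) (φ₂ s) * deriv φ₂ s) = ((κ s * N s 2 : ℝ) : ℂ) := by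
        rw [ha', hb', ha, hb]
        push_cast
        rw [hNc2]
        simp only [map_sub, map_add, map_mul, map_pow, map_neg, map_ofNat, Complex.conj_I,
          Complex.conj_conj, Complex.conj_ofReal]
        push_cast
        ring
      have hcc2 : -2 * (deriv φ₁ s * φ₂ s + φ₁ s * deriv φ₂ s)
          = ((-(κ s) * T s 2 + τ s * B s 2 : ℝ) : ℂ)
            + ((-(τ s) * N s 2 : ℝ) : ℂ) * Complex.I := by
        rw [ha, hb]
        push_cast
        linear_combination ((κ s : ℝ) : ℂ) * hT2c s
          + Complex.I * ((τ s : ℝ) : ℂ) * hNB2c s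
          - ((τ s : ℝ) : ℂ) * ((B s 2 : ℝ) : ℂ) * Complex.I_sq
      refine ⟨fun i => ?_, fun i => ?_, fun i => ?_⟩
      · fin_cases i
        · show deriv (fun t => T t 0) s = κ s * N s 0
          rw [hdT0, hcT0, Complex.ofReal_re]
        · show deriv (fun t => T t 1) s = κ s * N s 1
          rw [hdT1, hcT1, Complex.ofReal_re]
        · show deriv (fun t => T t 2) s = κ s * N s 2
          rw [hdT2, hcT2, Complex.ofReal_re]
      · fin_cases i
        · show deriv (fun t => N t 0) s = -(κ s) * T s 0 + τ s * B s 0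
          rw [hdN0, hcc0]; simp
        · show deriv (fun t => N t 1) s = -(κ s) * T s 1 + τ s * B s 1
          rw [hdN1, hcc1]; simp
        · show deriv (fun t => N t 2) s = -(κ s) * T s 2 + τ s * B s 2
          rw [hdN2, hcc2]; simp
      · fin_cases i
        · show deriv (fun t => B t 0) s = -(τ s) * N s 0
          rw [hdB0, hcc0]; simp
        · show deriv (fun t => B t 1) s = -(τ s) * N s 1
          rw [hdB1, hcc1]; simp
        · show deriv (fun t => B t 2) s = -(τ s) * N s 2
          rw [hdB2, hcc2]; simp
  constructor
  · rintro ⟨h1, h2, h3⟩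
    exact ⟨fun s => ((key s).mp ⟨fun i => h1 s i, fun i => h2 s i, fun i => h3 s i⟩).1,
           fun s => ((key s).mp ⟨fun i => h1 s i, fun i => h2 s i, fun i => h3 s i⟩).2⟩
  · rintro ⟨h1, h2⟩
    exact ⟨fun s i => ((key s).mpr ⟨h1 s, h2 s⟩).1 i,
           fun s i => ((key s).mpr ⟨h1 s, h2 s⟩).2.1 i,
           fun s i => ((key s).mpr ⟨h1 s, h2 s⟩).2.2 i⟩
end

section
/- Let φ : ℝ → ℂ² be a differentiable curve of unit spinors (conj(φ(s))ᵗφ(s) = 1 for all s), let κ, τ : ℝ → ℝ be functions, and define T, N, B : ℝ → ℝ³ by N(s) + iB(s) = φ(s)ᵗσφ(s) and T(s) = −φ̂(s)ᵗσφ(s). Then the Frenet equations of an arc-length curve in the Lie group SO(3) (where τ_G = 1/2), namely T′ = κN, N′ = −κT + (τ − 1/2)B, B′ = −(τ − 1/2)N, hold for all s if and only if φ′(s) = −i((τ(s) − 1/2)/2)·φ(s) + (κ(s)/2)·φ̂(s) for all s. -/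
open Complex

/-- Spinor Frenet equation in the Lie group SO(3) (τ_G = 1/2): the Frenet equations T′ = κN, N′ = −κT + (τ − 1/2)B, B′ = −(τ − 1/2)N hold iff φ′ = −i((τ − 1/2)/2)φ + (κ/2)φ̂. -/
theorem spinor_frenet_SO3 (φ₁ φ₂ : ℝ → ℂ) (κ τ : ℝ → ℝ)
    (T N B : ℝ → Fin 3 → ℝ)
    (hd₁ : Differentiable ℝ φ₁) (hd₂ : Differentiable ℝ φ₂)
    (hunit : ∀ s, (starRingEnd ℂ) (φ₁ s) * φ₁ s + (starRingEnd ℂ) (φ₂ s) * φ₂ s = 1)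
    (hNB : ∀ s i, (N s i : ℂ) + Complex.I * (B s i : ℂ) =
      ![φ₁ s ^ 2 - φ₂ s ^ 2, Complex.I * (φ₁ s ^ 2 + φ₂ s ^ 2),
        -2 * φ₁ s * φ₂ s] i)
    (hT : ∀ s i, (T s i : ℂ) =
      ![φ₁ s * (starRingEnd ℂ) (φ₂ s) + (starRingEnd ℂ) (φ₁ s) * φ₂ s,
        Complex.I * ((starRingEnd ℂ) (φ₂ s) * φ₁ s - (starRingEnd ℂ) (φ₁ s) * φ₂ s),
        ((‖φ₁ s‖ ^ 2 - ‖φ₂ s‖ ^ 2 : ℝ) : ℂ)] i) :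
    ((∀ s i, deriv (fun t => T t i) s = κ s * N s i) ∧
     (∀ s i, deriv (fun t => N t i) s = -(κ s) * T s i + (τ s - 1/2) * B s i) ∧
     (∀ s i, deriv (fun t => B t i) s = -(τ s - 1/2) * N s i)) ↔
    ((∀ s, deriv φ₁ s =
        -Complex.I * ((τ s - 1/2 : ℝ) / 2) * φ₁ s + (κ s / 2) * (-(starRingEnd ℂ) (φ₂ s))) ∧
     (∀ s, deriv φ₂ s =
        -Complex.I * ((τ s - 1/2 : ℝ) / 2) * φ₂ s + (κ s / 2) * ((starRingEnd ℂ) (φ₁ s)))) := by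
  -- pointwise component identities
  have hN0 : ∀ t, N t 0 = (φ₁ t ^ 2 - φ₂ t ^ 2).re := by
    intro t
    have h := congrArg Complex.re (hNB t 0)
    simpa using h
  have hB0 : ∀ t, B t 0 = (φ₁ t ^ 2 - φ₂ t ^ 2).im := by
    intro t
    have h := congrArg Complex.im (hNB t 0)
    simpa using h
  have hN1 : ∀ t, N t 1 = -((φ₁ t ^ 2 + φ₂ t ^ 2).im) := by
    intro t
    have h := congrArg Complex.re (hNB t 1)
    simpa using h
  have hB1 : ∀ t, B t 1 = (φ₁ t ^ 2 + φ₂ t ^ 2).re := by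
    intro t
    have h := congrArg Complex.im (hNB t 1)
    simpa using h
  have hN2 : ∀ t, N t 2 = (-2 * φ₁ t * φ₂ t).re := by
    intro t
    have h := congrArg Complex.re (hNB t 2)
    simpa using h
  have hB2 : ∀ t, B t 2 = (-2 * φ₁ t * φ₂ t).im := by
    intro t
    have h := congrArg Complex.im (hNB t 2)
    simpa using h
  have hT0 : ∀ t, T t 0 = (φ₁ t * (starRingEnd ℂ) (φ₂ t) + (starRingEnd ℂ) (φ₁ t) * φ₂ t).re := by
    intro t
    have h := congrArg Complex.re (hT t 0)
    simpa using h
  have hT1 : ∀ t, T t 1 = -(((starRingEnd ℂ) (φ₂ t) * φ₁ t - (starRingEnd ℂ) (φ₁ t) * φ₂ t).im) := by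
    intro t
    have h := congrArg Complex.re (hT t 1)
    simpa using h
  have hT2 : ∀ t, T t 2 = ((starRingEnd ℂ) (φ₁ t) * φ₁ t - (starRingEnd ℂ) (φ₂ t) * φ₂ t).re := by
    intro t
    have h := congrArg Complex.re (hT t 2)
    simp at h
    rw [h]
    simp [← Complex.ofReal_pow, Complex.mul_re, Complex.conj_re, Complex.conj_im,
      Complex.sq_norm, Complex.normSq_apply]
  -- derivative builders
  have p1 : ∀ s, HasDerivAt φ₁ (deriv φ₁ s) s := fun s => (hd₁ s).hasDerivAt
  have p2 : ∀ s, HasDerivAt φ₂ (deriv φ₂ s) s := fun s => (hd₂ s).hasDerivAt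
  have c1 : ∀ s, HasDerivAt (fun t => (starRingEnd ℂ) (φ₁ t)) ((starRingEnd ℂ) (deriv φ₁ s)) s := by
    intro s
    simpa only [starRingEnd_apply] using (p1 s).star
  have c2 : ∀ s, HasDerivAt (fun t => (starRingEnd ℂ) (φ₂ t)) ((starRingEnd ℂ) (deriv φ₂ s)) s := by
    intro s
    simpa only [starRingEnd_apply] using (p2 s).star
  have sq1 : ∀ s, HasDerivAt (fun t => φ₁ t ^ 2) (2 * φ₁ s * deriv φ₁ s) s := by
    intro s
    have h := (p1 s).mul (p1 s)
    have e : (fun t => φ₁ t ^ 2) = fun t => φ₁ t * φ₁ t := by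
      funext t; ring
    rw [e]; exact h.congr_deriv (by ring)
  have sq2 : ∀ s, HasDerivAt (fun t => φ₂ t ^ 2) (2 * φ₂ s * deriv φ₂ s) s := by
    intro s
    have h := (p2 s).mul (p2 s)
    have e : (fun t => φ₂ t ^ 2) = fun t => φ₂ t * φ₂ t := by
      funext t; ring
    rw [e]; exact h.congr_deriv (by ring)
  have hH0d : ∀ s, HasDerivAt (fun t => φ₁ t ^ 2 - φ₂ t ^ 2)
      (2 * φ₁ s * deriv φ₁ s - 2 * φ₂ s * deriv φ₂ s) s := fun s => (sq1 s).sub (sq2 s)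
  have hH1d : ∀ s, HasDerivAt (fun t => φ₁ t ^ 2 + φ₂ t ^ 2)
      (2 * φ₁ s * deriv φ₁ s + 2 * φ₂ s * deriv φ₂ s) s := fun s => (sq1 s).add (sq2 s)
  have hH2d : ∀ s, HasDerivAt (fun t => -2 * φ₁ t * φ₂ t)
      (-2 * deriv φ₁ s * φ₂ s + -2 * φ₁ s * deriv φ₂ s) s := by
    intro s
    exact ((p1 s).const_mul (-2 : ℂ)).mul (p2 s)
  have hG0d : ∀ s, HasDerivAt (fun t => φ₁ t * (starRingEnd ℂ) (φ₂ t) + (starRingEnd ℂ) (φ₁ t) * φ₂ t)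
      (deriv φ₁ s * (starRingEnd ℂ) (φ₂ s) + φ₁ s * (starRingEnd ℂ) (deriv φ₂ s)
        + ((starRingEnd ℂ) (deriv φ₁ s) * φ₂ s + (starRingEnd ℂ) (φ₁ s) * deriv φ₂ s)) s :=
    fun s => ((p1 s).mul (c2 s)).add ((c1 s).mul (p2 s))
  have hWd : ∀ s, HasDerivAt (fun t => (starRingEnd ℂ) (φ₂ t) * φ₁ t - (starRingEnd ℂ) (φ₁ t) * φ₂ t)
      ((starRingEnd ℂ) (deriv φ₂ s) * φ₁ s + (starRingEnd ℂ) (φ₂ s) * deriv φ₁ s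
        - ((starRingEnd ℂ) (deriv φ₁ s) * φ₂ s + (starRingEnd ℂ) (φ₁ s) * deriv φ₂ s)) s :=
    fun s => ((c2 s).mul (p1 s)).sub ((c1 s).mul (p2 s))
  have hG2d : ∀ s, HasDerivAt (fun t => (starRingEnd ℂ) (φ₁ t) * φ₁ t - (starRingEnd ℂ) (φ₂ t) * φ₂ t)
      ((starRingEnd ℂ) (deriv φ₁ s) * φ₁ s + (starRingEnd ℂ) (φ₁ s) * deriv φ₁ s
        - ((starRingEnd ℂ) (deriv φ₂ s) * φ₂ s + (starRingEnd ℂ) (φ₂ s) * deriv φ₂ s)) s :=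
    fun s => ((c1 s).mul (p1 s)).sub ((c2 s).mul (p2 s))
  -- derivatives of the frame components
  have dT0 : ∀ s, deriv (fun t => T t 0) s =
      (deriv φ₁ s * (starRingEnd ℂ) (φ₂ s) + φ₁ s * (starRingEnd ℂ) (deriv φ₂ s)
        + ((starRingEnd ℂ) (deriv φ₁ s) * φ₂ s + (starRingEnd ℂ) (φ₁ s) * deriv φ₂ s)).re := by
    intro s
    rw [show (fun t => T t 0) = (fun t => (φ₁ t * (starRingEnd ℂ) (φ₂ t) + (starRingEnd ℂ) (φ₁ t) * φ₂ t).re) from funext hT0]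
    exact (hasDerivAt_re' (hG0d s)).deriv
  have dT1 : ∀ s, deriv (fun t => T t 1) s =
      -(((starRingEnd ℂ) (deriv φ₂ s) * φ₁ s + (starRingEnd ℂ) (φ₂ s) * deriv φ₁ s
        - ((starRingEnd ℂ) (deriv φ₁ s) * φ₂ s + (starRingEnd ℂ) (φ₁ s) * deriv φ₂ s)).im) := by
    intro s
    rw [show (fun t => T t 1) = (fun t => -(((starRingEnd ℂ) (φ₂ t) * φ₁ t - (starRingEnd ℂ) (φ₁ t) * φ₂ t).im)) from funext hT1]
    exact ((hasDerivAt_im' (hWd s)).neg).deriv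
  have dT2 : ∀ s, deriv (fun t => T t 2) s =
      ((starRingEnd ℂ) (deriv φ₁ s) * φ₁ s + (starRingEnd ℂ) (φ₁ s) * deriv φ₁ s
        - ((starRingEnd ℂ) (deriv φ₂ s) * φ₂ s + (starRingEnd ℂ) (φ₂ s) * deriv φ₂ s)).re := by
    intro s
    rw [show (fun t => T t 2) = (fun t => ((starRingEnd ℂ) (φ₁ t) * φ₁ t - (starRingEnd ℂ) (φ₂ t) * φ₂ t).re) from funext hT2]
    exact (hasDerivAt_re' (hG2d s)).deriv
  have dN0 : ∀ s, deriv (fun t => N t 0) s = (2 * φ₁ s * deriv φ₁ s - 2 * φ₂ s * deriv φ₂ s).re := by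
    intro s
    rw [show (fun t => N t 0) = (fun t => (φ₁ t ^ 2 - φ₂ t ^ 2).re) from funext hN0]
    exact (hasDerivAt_re' (hH0d s)).deriv
  have dB0 : ∀ s, deriv (fun t => B t 0) s = (2 * φ₁ s * deriv φ₁ s - 2 * φ₂ s * deriv φ₂ s).im := by
    intro s
    rw [show (fun t => B t 0) = (fun t => (φ₁ t ^ 2 - φ₂ t ^ 2).im) from funext hB0]
    exact (hasDerivAt_im' (hH0d s)).deriv
  have dN1 : ∀ s, deriv (fun t => N t 1) s = -((2 * φ₁ s * deriv φ₁ s + 2 * φ₂ s * deriv φ₂ s).im) := by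
    intro s
    rw [show (fun t => N t 1) = (fun t => -((φ₁ t ^ 2 + φ₂ t ^ 2).im)) from funext hN1]
    exact ((hasDerivAt_im' (hH1d s)).neg).deriv
  have dB1 : ∀ s, deriv (fun t => B t 1) s = (2 * φ₁ s * deriv φ₁ s + 2 * φ₂ s * deriv φ₂ s).re := by
    intro s
    rw [show (fun t => B t 1) = (fun t => (φ₁ t ^ 2 + φ₂ t ^ 2).re) from funext hB1]
    exact (hasDerivAt_re' (hH1d s)).deriv
  have dN2 : ∀ s, deriv (fun t => N t 2) s = (-2 * deriv φ₁ s * φ₂ s + -2 * φ₁ s * deriv φ₂ s).re := by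
    intro s
    rw [show (fun t => N t 2) = (fun t => (-2 * φ₁ t * φ₂ t).re) from funext hN2]
    exact (hasDerivAt_re' (hH2d s)).deriv
  have dB2 : ∀ s, deriv (fun t => B t 2) s = (-2 * deriv φ₁ s * φ₂ s + -2 * φ₁ s * deriv φ₂ s).im := by
    intro s
    rw [show (fun t => B t 2) = (fun t => (-2 * φ₁ t * φ₂ t).im) from funext hB2]
    exact (hasDerivAt_im' (hH2d s)).deriv
  constructor
  · rintro ⟨hFt, hFn, hFb⟩
    have key : ∀ s, (deriv φ₁ s =
        -Complex.I * ((τ s - 1/2 : ℝ) / 2) * φ₁ s + (κ s / 2) * (-(starRingEnd ℂ) (φ₂ s))) ∧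
        (deriv φ₂ s =
        -Complex.I * ((τ s - 1/2 : ℝ) / 2) * φ₂ s + (κ s / 2) * ((starRingEnd ℂ) (φ₁ s))) := by
      intro s
      have hu := hunit s
      have E0 : 2 * φ₁ s * deriv φ₁ s - 2 * φ₂ s * deriv φ₂ s
          = -(κ s : ℂ) * (φ₁ s * (starRingEnd ℂ) (φ₂ s) + (starRingEnd ℂ) (φ₁ s) * φ₂ s)
            - Complex.I * ((τ s - 1/2 : ℝ) : ℂ) * (φ₁ s ^ 2 - φ₂ s ^ 2) := by
        have hre := hFn s 0
        rw [dN0 s, hT0 s, hB0 s] at hre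
        have him := hFb s 0
        rw [dB0 s, hN0 s] at him
        apply Complex.ext
        · simp only [Complex.add_re, Complex.add_im, Complex.sub_re, Complex.sub_im,
            Complex.mul_re, Complex.mul_im, Complex.neg_re, Complex.neg_im, Complex.I_re,
            Complex.I_im, Complex.ofReal_re, Complex.ofReal_im, Complex.conj_re, Complex.conj_im,
            Complex.re_ofNat, Complex.im_ofNat, pow_two] at hre ⊢
          linear_combination hre
        · simp only [Complex.add_re, Complex.add_im, Complex.sub_re, Complex.sub_im,
            Complex.mul_re, Complex.mul_im, Complex.neg_re, Complex.neg_im, Complex.I_re,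
            Complex.I_im, Complex.ofReal_re, Complex.ofReal_im, Complex.conj_re, Complex.conj_im,
            Complex.re_ofNat, Complex.im_ofNat, pow_two] at him ⊢
          linear_combination him
      have E1 : 2 * φ₁ s * deriv φ₁ s + 2 * φ₂ s * deriv φ₂ s
          = -Complex.I * ((τ s - 1/2 : ℝ) : ℂ) * (φ₁ s ^ 2 + φ₂ s ^ 2)
            - (κ s : ℂ) * ((starRingEnd ℂ) (φ₂ s) * φ₁ s - (starRingEnd ℂ) (φ₁ s) * φ₂ s) := by
        have hre := hFn s 1
        rw [dN1 s, hT1 s, hB1 s] at hre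
        have him := hFb s 1
        rw [dB1 s, hN1 s] at him
        apply Complex.ext
        · simp only [Complex.add_re, Complex.add_im, Complex.sub_re, Complex.sub_im,
            Complex.mul_re, Complex.mul_im, Complex.neg_re, Complex.neg_im, Complex.I_re,
            Complex.I_im, Complex.ofReal_re, Complex.ofReal_im, Complex.conj_re, Complex.conj_im,
            Complex.re_ofNat, Complex.im_ofNat, pow_two] at him ⊢
          linear_combination him
        · simp only [Complex.add_re, Complex.add_im, Complex.sub_re, Complex.sub_im,
            Complex.mul_re, Complex.mul_im, Complex.neg_re, Complex.neg_im, Complex.I_re,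
            Complex.I_im, Complex.ofReal_re, Complex.ofReal_im, Complex.conj_re, Complex.conj_im,
            Complex.re_ofNat, Complex.im_ofNat, pow_two] at hre ⊢
          linear_combination -hre
      have E2 : -2 * deriv φ₁ s * φ₂ s + -2 * φ₁ s * deriv φ₂ s
          = -(κ s : ℂ) * ((starRingEnd ℂ) (φ₁ s) * φ₁ s - (starRingEnd ℂ) (φ₂ s) * φ₂ s)
            - Complex.I * ((τ s - 1/2 : ℝ) : ℂ) * (-2 * φ₁ s * φ₂ s) := by
        have hre := hFn s 2
        rw [dN2 s, hT2 s, hB2 s] at hre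
        have him := hFb s 2
        rw [dB2 s, hN2 s] at him
        apply Complex.ext
        · simp only [Complex.add_re, Complex.add_im, Complex.sub_re, Complex.sub_im,
            Complex.mul_re, Complex.mul_im, Complex.neg_re, Complex.neg_im, Complex.I_re,
            Complex.I_im, Complex.ofReal_re, Complex.ofReal_im, Complex.conj_re, Complex.conj_im,
            Complex.re_ofNat, Complex.im_ofNat, pow_two] at hre ⊢
          linear_combination hre
        · simp only [Complex.add_re, Complex.add_im, Complex.sub_re, Complex.sub_im,
            Complex.mul_re, Complex.mul_im, Complex.neg_re, Complex.neg_im, Complex.I_re,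
            Complex.I_im, Complex.ofReal_re, Complex.ofReal_im, Complex.conj_re, Complex.conj_im,
            Complex.re_ofNat, Complex.im_ofNat, pow_two] at him ⊢
          linear_combination him
      -- algebraic elimination
      have h1 : φ₁ s * (deriv φ₁ s + Complex.I * (((τ s - 1/2 : ℝ) : ℂ)/2) * φ₁ s
          + ((κ s : ℂ)/2) * (starRingEnd ℂ) (φ₂ s)) = 0 := by
        linear_combination (E0 + E1)/4
      have h2 : φ₂ s * (deriv φ₂ s + Complex.I * (((τ s - 1/2 : ℝ) : ℂ)/2) * φ₂ s
          - ((κ s : ℂ)/2) * (starRingEnd ℂ) (φ₁ s)) = 0 := by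
        linear_combination (E1 - E0)/4
      have h3 : φ₂ s * (deriv φ₁ s + Complex.I * (((τ s - 1/2 : ℝ) : ℂ)/2) * φ₁ s
          + ((κ s : ℂ)/2) * (starRingEnd ℂ) (φ₂ s))
          + φ₁ s * (deriv φ₂ s + Complex.I * (((τ s - 1/2 : ℝ) : ℂ)/2) * φ₂ s
          - ((κ s : ℂ)/2) * (starRingEnd ℂ) (φ₁ s)) = 0 := by
        linear_combination (-1/2 : ℂ) * E2
      set r1 := deriv φ₁ s + Complex.I * (((τ s - 1/2 : ℝ) : ℂ)/2) * φ₁ s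
          + ((κ s : ℂ)/2) * (starRingEnd ℂ) (φ₂ s) with hr1
      set r2 := deriv φ₂ s + Complex.I * (((τ s - 1/2 : ℝ) : ℂ)/2) * φ₂ s
          - ((κ s : ℂ)/2) * (starRingEnd ℂ) (φ₁ s) with hr2
      have s1 : r1 = -((starRingEnd ℂ) (φ₂ s) * φ₁ s * r2) := by
        linear_combination (-r1) * hu + (starRingEnd ℂ) (φ₁ s) * h1 + (starRingEnd ℂ) (φ₂ s) * h3
      have s2 : r2 = -((starRingEnd ℂ) (φ₁ s) * φ₂ s * r1) := by
        linear_combination (-r2) * hu + (starRingEnd ℂ) (φ₂ s) * h2 + (starRingEnd ℂ) (φ₁ s) * h3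
      have s3 : (1 - (starRingEnd ℂ) (φ₁ s) * φ₁ s * ((starRingEnd ℂ) (φ₂ s) * φ₂ s)) * r1 = 0 := by
        linear_combination s1 - (starRingEnd ℂ) (φ₂ s) * φ₁ s * s2
      have hx : φ₁ s * (starRingEnd ℂ) (φ₁ s) = ((Complex.normSq (φ₁ s) : ℝ) : ℂ) :=
        Complex.mul_conj _
      have hy : φ₂ s * (starRingEnd ℂ) (φ₂ s) = ((Complex.normSq (φ₂ s) : ℝ) : ℂ) :=
        Complex.mul_conj _
      have hsum : Complex.normSq (φ₁ s) + Complex.normSq (φ₂ s) = 1 := by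
        have h := hu
        rw [mul_comm ((starRingEnd ℂ) (φ₁ s)) (φ₁ s), mul_comm ((starRingEnd ℂ) (φ₂ s)) (φ₂ s),
          hx, hy, ← Complex.ofReal_add, ← Complex.ofReal_one] at h
        exact_mod_cast h
      have hfac : (1 : ℂ) - (starRingEnd ℂ) (φ₁ s) * φ₁ s * ((starRingEnd ℂ) (φ₂ s) * φ₂ s) ≠ 0 := by
        rw [mul_comm ((starRingEnd ℂ) (φ₁ s)) (φ₁ s), mul_comm ((starRingEnd ℂ) (φ₂ s)) (φ₂ s),
          hx, hy, ← Complex.ofReal_mul, ← Complex.ofReal_one, ← Complex.ofReal_sub]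
        rw [Ne, Complex.ofReal_eq_zero]
        have h1' := Complex.normSq_nonneg (φ₁ s)
        have h2' := Complex.normSq_nonneg (φ₂ s)
        nlinarith [sq_nonneg (Complex.normSq (φ₁ s) - Complex.normSq (φ₂ s))]
      have hr1z : r1 = 0 := by
        rcases mul_eq_zero.mp s3 with h | h
        · exact absurd h hfac
        · exact h
      have hr2z : r2 = 0 := by
        rw [s2, hr1z]
        ring
      constructor
      · rw [hr1] at hr1z
        linear_combination hr1z
      · rw [hr2] at hr2z
        linear_combination hr2z
    exact ⟨fun s => (key s).1, fun s => (key s).2⟩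
  · rintro ⟨hs1, hs2⟩
    have hs1' : ∀ s, deriv φ₁ s = -Complex.I * ((((τ s - 1/2)/2 : ℝ)) : ℂ) * φ₁ s
        - (((κ s/2 : ℝ)) : ℂ) * (starRingEnd ℂ) (φ₂ s) := by
      intro s; rw [hs1 s]; push_cast; ring
    have hs2' : ∀ s, deriv φ₂ s = -Complex.I * ((((τ s - 1/2)/2 : ℝ)) : ℂ) * φ₂ s
        + (((κ s/2 : ℝ)) : ℂ) * (starRingEnd ℂ) (φ₁ s) := by
      intro s; rw [hs2 s]; push_cast; ring
    have hc1' : ∀ s, (starRingEnd ℂ) (deriv φ₁ s) = Complex.I * ((((τ s - 1/2)/2 : ℝ)) : ℂ) * (starRingEnd ℂ) (φ₁ s)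
        - (((κ s/2 : ℝ)) : ℂ) * φ₂ s := by
      intro s
      rw [hs1' s]
      simp only [map_sub, map_mul, map_neg, Complex.conj_I, Complex.conj_conj, Complex.conj_ofReal]
      ring
    have hc2' : ∀ s, (starRingEnd ℂ) (deriv φ₂ s) = Complex.I * ((((τ s - 1/2)/2 : ℝ)) : ℂ) * (starRingEnd ℂ) (φ₂ s)
        + (((κ s/2 : ℝ)) : ℂ) * φ₁ s := by
      intro s
      rw [hs2' s]
      simp only [map_add, map_mul, map_neg, Complex.conj_I, Complex.conj_conj, Complex.conj_ofReal]
      ring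
    refine ⟨fun s i => ?_, fun s i => ?_, fun s i => ?_⟩ <;> fin_cases i
    · show deriv (fun t => T t 0) s = κ s * N s 0
      rw [dT0 s, hN0 s, hc1' s, hc2' s, hs1' s, hs2' s]
      simp only [Complex.add_re, Complex.add_im, Complex.sub_re, Complex.sub_im,
        Complex.mul_re, Complex.mul_im, Complex.neg_re, Complex.neg_im, Complex.I_re,
        Complex.I_im, Complex.ofReal_re, Complex.ofReal_im, Complex.conj_re, Complex.conj_im,
        Complex.re_ofNat, Complex.im_ofNat, pow_two]
      ring
    · show deriv (fun t => T t 1) s = κ s * N s 1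
      rw [dT1 s, hN1 s, hc1' s, hc2' s, hs1' s, hs2' s]
      simp only [Complex.add_re, Complex.add_im, Complex.sub_re, Complex.sub_im,
        Complex.mul_re, Complex.mul_im, Complex.neg_re, Complex.neg_im, Complex.I_re,
        Complex.I_im, Complex.ofReal_re, Complex.ofReal_im, Complex.conj_re, Complex.conj_im,
        Complex.re_ofNat, Complex.im_ofNat, pow_two]
      ring
    · show deriv (fun t => T t 2) s = κ s * N s 2
      rw [dT2 s, hN2 s, hc1' s, hc2' s, hs1' s, hs2' s]
      simp only [Complex.add_re, Complex.add_im, Complex.sub_re, Complex.sub_im,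
        Complex.mul_re, Complex.mul_im, Complex.neg_re, Complex.neg_im, Complex.I_re,
        Complex.I_im, Complex.ofReal_re, Complex.ofReal_im, Complex.conj_re, Complex.conj_im,
        Complex.re_ofNat, Complex.im_ofNat, pow_two]
      ring
    · show deriv (fun t => N t 0) s = -(κ s) * T s 0 + (τ s - 1/2) * B s 0
      rw [dN0 s, hT0 s, hB0 s, hs1' s, hs2' s]
      simp only [Complex.add_re, Complex.add_im, Complex.sub_re, Complex.sub_im,
        Complex.mul_re, Complex.mul_im, Complex.neg_re, Complex.neg_im, Complex.I_re,
        Complex.I_im, Complex.ofReal_re, Complex.ofReal_im, Complex.conj_re, Complex.conj_im,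
        Complex.re_ofNat, Complex.im_ofNat, pow_two]
      ring
    · show deriv (fun t => N t 1) s = -(κ s) * T s 1 + (τ s - 1/2) * B s 1
      rw [dN1 s, hT1 s, hB1 s, hs1' s, hs2' s]
      simp only [Complex.add_re, Complex.add_im, Complex.sub_re, Complex.sub_im,
        Complex.mul_re, Complex.mul_im, Complex.neg_re, Complex.neg_im, Complex.I_re,
        Complex.I_im, Complex.ofReal_re, Complex.ofReal_im, Complex.conj_re, Complex.conj_im,
        Complex.re_ofNat, Complex.im_ofNat, pow_two]
      ring
    · show deriv (fun t => N t 2) s = -(κ s) * T s 2 + (τ s - 1/2) * B s 2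
      rw [dN2 s, hT2 s, hB2 s, hs1' s, hs2' s]
      simp only [Complex.add_re, Complex.add_im, Complex.sub_re, Complex.sub_im,
        Complex.mul_re, Complex.mul_im, Complex.neg_re, Complex.neg_im, Complex.I_re,
        Complex.I_im, Complex.ofReal_re, Complex.ofReal_im, Complex.conj_re, Complex.conj_im,
        Complex.re_ofNat, Complex.im_ofNat, pow_two]
      ring
    · show deriv (fun t => B t 0) s = -(τ s - 1/2) * N s 0
      rw [dB0 s, hN0 s, hs1' s, hs2' s]
      simp only [Complex.add_re, Complex.add_im, Complex.sub_re, Complex.sub_im,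
        Complex.mul_re, Complex.mul_im, Complex.neg_re, Complex.neg_im, Complex.I_re,
        Complex.I_im, Complex.ofReal_re, Complex.ofReal_im, Complex.conj_re, Complex.conj_im,
        Complex.re_ofNat, Complex.im_ofNat, pow_two]
      ring
    · show deriv (fun t => B t 1) s = -(τ s - 1/2) * N s 1
      rw [dB1 s, hN1 s, hs1' s, hs2' s]
      simp only [Complex.add_re, Complex.add_im, Complex.sub_re, Complex.sub_im,
        Complex.mul_re, Complex.mul_im, Complex.neg_re, Complex.neg_im, Complex.I_re,
        Complex.I_im, Complex.ofReal_re, Complex.ofReal_im, Complex.conj_re, Complex.conj_im,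
        Complex.re_ofNat, Complex.im_ofNat, pow_two]
      ring
    · show deriv (fun t => B t 2) s = -(τ s - 1/2) * N s 2
      rw [dB2 s, hN2 s, hs1' s, hs2' s]
      simp only [Complex.add_re, Complex.add_im, Complex.sub_re, Complex.sub_im,
        Complex.mul_re, Complex.mul_im, Complex.neg_re, Complex.neg_im, Complex.I_re,
        Complex.I_im, Complex.ofReal_re, Complex.ofReal_im, Complex.conj_re, Complex.conj_im,
        Complex.re_ofNat, Complex.im_ofNat, pow_two]
      ring
end

section
/- Let φ : ℝ → ℂ² be a differentiable curve of unit spinors (conj(φ(s))ᵗφ(s) = 1 for all s), let κ, τ : ℝ → ℝ be functions, and define T, N, B : ℝ → ℝ³ by N(s) + iB(s) = φ(s)ᵗσφ(s) and T(s) = −φ̂(s)ᵗσφ(s). Then the Frenet equations of an arc-length curve in the Lie group S³ (where τ_G = 1), namely T′ = κN, N′ = −κT + (τ − 1)B, B′ = −(τ − 1)N, hold for all s if and only if φ′(s) = −i((τ(s) − 1)/2)·φ(s) + (κ(s)/2)·φ̂(s) for all s. -/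
open Complex

private lemma hasDerivAt_re'_s14 {g : ℝ → ℂ} {c : ℂ} {s : ℝ} (h : HasDerivAt g c s) :
    HasDerivAt (fun t => (g t).re) c.re s :=
  Complex.reCLM.hasFDerivAt.comp_hasDerivAt s h

private lemma hasDerivAt_im'_s14 {g : ℝ → ℂ} {c : ℂ} {s : ℝ} (h : HasDerivAt g c s) :
    HasDerivAt (fun t => (g t).im) c.im s :=
  Complex.imCLM.hasFDerivAt.comp_hasDerivAt s h

private lemma fwd_alg (p q u v : ℂ) (k m : ℝ)
    (hu1 : (starRingEnd ℂ) p * p + (starRingEnd ℂ) q * q = 1)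
    (h1 : 2*p*u - 2*q*v = -I*m*(p^2-q^2) - k*(p*(starRingEnd ℂ) q + (starRingEnd ℂ) p*q))
    (h2 : I*(2*p*u + 2*q*v) = -I*m*(I*(p^2+q^2)) - k*(I*((starRingEnd ℂ) q*p - (starRingEnd ℂ) p*q)))
    (h3 : -2*(u*q + p*v) = -I*m*(-2*p*q) - k*((starRingEnd ℂ) p*p - (starRingEnd ℂ) q*q)) :
    u = -I*(m/2)*p - (k/2)*(starRingEnd ℂ) q ∧
    v = -I*(m/2)*q + (k/2)*(starRingEnd ℂ) p := by
  set P := (starRingEnd ℂ) p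
  set Q := (starRingEnd ℂ) q
  have h2' : 2*p*u + 2*q*v = -I*(m:ℂ)*(p^2+q^2) - (k:ℂ)*(Q*p - P*q) := by
    linear_combination (-I)*h2
      + (2*p*u + 2*q*v + I*(m:ℂ)*(p^2+q^2) + (k:ℂ)*(Q*p - P*q)) * Complex.I_sq
  have h3' : u*q + p*v = -I*(m:ℂ)*(p*q) + ((k:ℂ)/2)*(P*p - Q*q) := by
    linear_combination (-1/2 : ℂ)*h3
  constructor
  · linear_combination (P*P*p+2*P*Q*q)/4 * (h1 + h2') + Q*Q*q * h3' - Q*Q*p/4 * (h2' - h1)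
      - (u + I*(m/2)*p + (k/2)*Q)*(P*p+Q*q+1) * hu1
  · linear_combination (Q*Q*q+2*Q*P*p)/4 * (h2' - h1) + P*P*p * h3' - P*P*q/4 * (h1 + h2')
      - (v + I*(m/2)*q - (k/2)*P)*(P*p+Q*q+1) * hu1

private lemma bwd_alg (p q u v : ℂ) (k m : ℝ)
    (hu : u = -I*(m/2)*p + (k/2)*(-(starRingEnd ℂ) q))
    (hv : v = -I*(m/2)*q + (k/2)*((starRingEnd ℂ) p)) :
    (2*p*u - 2*q*v = -I*m*(p^2-q^2) - k*(p*(starRingEnd ℂ) q + (starRingEnd ℂ) p*q)) ∧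
    (I*(2*p*u + 2*q*v) = -I*m*(I*(p^2+q^2)) - k*(I*((starRingEnd ℂ) q*p - (starRingEnd ℂ) p*q))) ∧
    (-2*(u*q + p*v) = -I*m*(-2*p*q) - k*(((starRingEnd ℂ) p*p - (starRingEnd ℂ) q*q))) ∧
    (u*(starRingEnd ℂ) q + p*(starRingEnd ℂ) v + (starRingEnd ℂ) u*q + (starRingEnd ℂ) p*v
      = k*((p^2-q^2) + ((starRingEnd ℂ) p^2-(starRingEnd ℂ) q^2))/2) ∧
    (I*((starRingEnd ℂ) v*p + (starRingEnd ℂ) q*u - (starRingEnd ℂ) u*q - (starRingEnd ℂ) p*v)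
      = k*(I*(p^2+q^2) + (-I)*((starRingEnd ℂ) p^2+(starRingEnd ℂ) q^2))/2) ∧
    ((starRingEnd ℂ) u*p + (starRingEnd ℂ) p*u - (starRingEnd ℂ) v*q - (starRingEnd ℂ) q*v
      = k*((-2*p*q) + (-2*(starRingEnd ℂ) p*(starRingEnd ℂ) q))/2) := by
  have hcu : (starRingEnd ℂ) u = I*(m/2)*(starRingEnd ℂ) p + (k/2)*(-q) := by
    rw [hu]; simp [map_mul, map_add, map_neg, map_div₀, Complex.conj_I, Complex.conj_ofReal,
      map_ofNat]
  have hcv : (starRingEnd ℂ) v = I*(m/2)*(starRingEnd ℂ) q + (k/2)*p := by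
    rw [hv]; simp [map_mul, map_add, map_div₀, Complex.conj_I, Complex.conj_ofReal, map_ofNat]
  refine ⟨by rw [hu,hv]; ring, by rw [hu,hv]; ring, by rw [hu,hv]; ring,
    by rw [hcu,hcv,hu,hv]; ring, by rw [hcu,hcv,hu,hv]; ring, by rw [hcu,hcv,hu,hv]; ring⟩

private lemma derivs_pack (φ₁ φ₂ : ℝ → ℂ) (hd₁ : Differentiable ℝ φ₁)
    (hd₂ : Differentiable ℝ φ₂) (s : ℝ) :
    HasDerivAt (fun t => φ₁ t ^ 2 - φ₂ t ^ 2)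
      (2*φ₁ s*deriv φ₁ s - 2*φ₂ s*deriv φ₂ s) s ∧
    HasDerivAt (fun t => Complex.I * (φ₁ t ^ 2 + φ₂ t ^ 2))
      (I*(2*φ₁ s*deriv φ₁ s + 2*φ₂ s*deriv φ₂ s)) s ∧
    HasDerivAt (fun t => -2 * φ₁ t * φ₂ t)
      (-2*(deriv φ₁ s*φ₂ s + φ₁ s*deriv φ₂ s)) s ∧
    HasDerivAt (fun t => φ₁ t * (starRingEnd ℂ) (φ₂ t) + (starRingEnd ℂ) (φ₁ t) * φ₂ t)
      (deriv φ₁ s*(starRingEnd ℂ) (φ₂ s) + φ₁ s*(starRingEnd ℂ) (deriv φ₂ s)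
        + (starRingEnd ℂ) (deriv φ₁ s)*φ₂ s + (starRingEnd ℂ) (φ₁ s)*deriv φ₂ s) s ∧
    HasDerivAt (fun t => Complex.I * ((starRingEnd ℂ) (φ₂ t) * φ₁ t - (starRingEnd ℂ) (φ₁ t) * φ₂ t))
      (I*((starRingEnd ℂ) (deriv φ₂ s)*φ₁ s + (starRingEnd ℂ) (φ₂ s)*deriv φ₁ s
        - (starRingEnd ℂ) (deriv φ₁ s)*φ₂ s - (starRingEnd ℂ) (φ₁ s)*deriv φ₂ s)) s ∧
    HasDerivAt (fun t => (starRingEnd ℂ) (φ₁ t) * φ₁ t - (starRingEnd ℂ) (φ₂ t) * φ₂ t)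
      ((starRingEnd ℂ) (deriv φ₁ s)*φ₁ s + (starRingEnd ℂ) (φ₁ s)*deriv φ₁ s
        - (starRingEnd ℂ) (deriv φ₂ s)*φ₂ s - (starRingEnd ℂ) (φ₂ s)*deriv φ₂ s) s := by
  have hu : HasDerivAt φ₁ (deriv φ₁ s) s := (hd₁ s).hasDerivAt
  have hv : HasDerivAt φ₂ (deriv φ₂ s) s := (hd₂ s).hasDerivAt
  have hcu : HasDerivAt (fun t => (starRingEnd ℂ) (φ₁ t)) ((starRingEnd ℂ) (deriv φ₁ s)) s :=
    hu.star
  have hcv : HasDerivAt (fun t => (starRingEnd ℂ) (φ₂ t)) ((starRingEnd ℂ) (deriv φ₂ s)) s :=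
    hv.star
  refine ⟨?_, ?_, ?_, ?_, ?_, ?_⟩
  · have e : (fun t => φ₁ t ^ 2 - φ₂ t ^ 2) = (fun t => φ₁ t * φ₁ t - φ₂ t * φ₂ t) := by
      funext t; ring
    rw [e]; exact ((hu.mul hu).sub (hv.mul hv)).congr_deriv (by ring)
  · have e : (fun t => Complex.I * (φ₁ t ^ 2 + φ₂ t ^ 2))
        = (fun t => I * (φ₁ t * φ₁ t + φ₂ t * φ₂ t)) := by funext t; ring
    rw [e]; exact (((hu.mul hu).add (hv.mul hv)).const_mul I).congr_deriv (by ring)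
  · have e : (fun t => -2 * φ₁ t * φ₂ t) = (fun t => (-2:ℂ) * (φ₁ t * φ₂ t)) := by
      funext t; ring
    rw [e]; exact ((hu.mul hv).const_mul (-2:ℂ)).congr_deriv (by ring)
  · exact ((hu.mul hcv).add (hcu.mul hv)).congr_deriv (by ring)
  · exact (((hcv.mul hu).sub (hcu.mul hv)).const_mul I).congr_deriv (by ring)
  · exact ((hcu.mul hu).sub (hcv.mul hv)).congr_deriv (by ring)

private lemma funs_eq (φ₁ φ₂ : ℝ → ℂ) (T N B : ℝ → Fin 3 → ℝ)
    (hNB : ∀ s i, (N s i : ℂ) + Complex.I * (B s i : ℂ) =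
      ![φ₁ s ^ 2 - φ₂ s ^ 2, Complex.I * (φ₁ s ^ 2 + φ₂ s ^ 2),
        -2 * φ₁ s * φ₂ s] i)
    (hT : ∀ s i, (T s i : ℂ) =
      ![φ₁ s * (starRingEnd ℂ) (φ₂ s) + (starRingEnd ℂ) (φ₁ s) * φ₂ s,
        Complex.I * ((starRingEnd ℂ) (φ₂ s) * φ₁ s - (starRingEnd ℂ) (φ₁ s) * φ₂ s),
        ((‖φ₁ s‖ ^ 2 - ‖φ₂ s‖ ^ 2 : ℝ) : ℂ)] i) :
    (∀ t, N t 0 = (φ₁ t ^ 2 - φ₂ t ^ 2).re) ∧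
    (∀ t, B t 0 = (φ₁ t ^ 2 - φ₂ t ^ 2).im) ∧
    (∀ t, N t 1 = (Complex.I * (φ₁ t ^ 2 + φ₂ t ^ 2)).re) ∧
    (∀ t, B t 1 = (Complex.I * (φ₁ t ^ 2 + φ₂ t ^ 2)).im) ∧
    (∀ t, N t 2 = (-2 * φ₁ t * φ₂ t).re) ∧
    (∀ t, B t 2 = (-2 * φ₁ t * φ₂ t).im) ∧
    (∀ t, T t 0 = (φ₁ t * (starRingEnd ℂ) (φ₂ t) + (starRingEnd ℂ) (φ₁ t) * φ₂ t).re) ∧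
    (∀ t, T t 1 = (Complex.I * ((starRingEnd ℂ) (φ₂ t) * φ₁ t - (starRingEnd ℂ) (φ₁ t) * φ₂ t)).re) ∧
    (∀ t, T t 2 = ((starRingEnd ℂ) (φ₁ t) * φ₁ t - (starRingEnd ℂ) (φ₂ t) * φ₂ t).re) := by
  refine ⟨fun t => ?_, fun t => ?_, fun t => ?_, fun t => ?_, fun t => ?_, fun t => ?_,
    fun t => ?_, fun t => ?_, fun t => ?_⟩
  · have h := hNB t 0; simp only [Matrix.cons_val_zero] at h
    have := congrArg Complex.re h; simpa using this
  · have h := hNB t 0; simp only [Matrix.cons_val_zero] at h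
    have := congrArg Complex.im h; simpa using this
  · have h := hNB t 1; simp only [Matrix.cons_val_one, Matrix.head_cons] at h
    have := congrArg Complex.re h; simpa using this
  · have h := hNB t 1; simp only [Matrix.cons_val_one, Matrix.head_cons] at h
    have := congrArg Complex.im h; simpa using this
  · have h := hNB t 2; simp only [Matrix.cons_val_two, Matrix.tail_cons, Matrix.head_cons] at h
    have := congrArg Complex.re h; simpa using this
  · have h := hNB t 2; simp only [Matrix.cons_val_two, Matrix.tail_cons, Matrix.head_cons] at h
    have := congrArg Complex.im h; simpa using this
  · have h := hT t 0; simp only [Matrix.cons_val_zero] at h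
    have := congrArg Complex.re h; simpa using this
  · have h := hT t 1; simp only [Matrix.cons_val_one, Matrix.head_cons] at h
    have := congrArg Complex.re h; simpa using this
  · have h := hT t 2; simp only [Matrix.cons_val_two, Matrix.tail_cons, Matrix.head_cons] at h
    have h2 : T t 2 = ‖φ₁ t‖ ^ 2 - ‖φ₂ t‖ ^ 2 := by exact_mod_cast h
    rw [h2]
    simp [Complex.sq_norm, Complex.normSq_apply, Complex.mul_re, Complex.sub_re,
      Complex.conj_re, Complex.conj_im]

private lemma vals_eq (φ₁ φ₂ : ℝ → ℂ) (T N B : ℝ → Fin 3 → ℝ)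
    (hNB : ∀ s i, (N s i : ℂ) + Complex.I * (B s i : ℂ) =
      ![φ₁ s ^ 2 - φ₂ s ^ 2, Complex.I * (φ₁ s ^ 2 + φ₂ s ^ 2),
        -2 * φ₁ s * φ₂ s] i)
    (hT : ∀ s i, (T s i : ℂ) =
      ![φ₁ s * (starRingEnd ℂ) (φ₂ s) + (starRingEnd ℂ) (φ₁ s) * φ₂ s,
        Complex.I * ((starRingEnd ℂ) (φ₂ s) * φ₁ s - (starRingEnd ℂ) (φ₁ s) * φ₂ s),
        ((‖φ₁ s‖ ^ 2 - ‖φ₂ s‖ ^ 2 : ℝ) : ℂ)] i) (s : ℝ) :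
    ((T s 0 : ℂ) = φ₁ s * (starRingEnd ℂ) (φ₂ s) + (starRingEnd ℂ) (φ₁ s) * φ₂ s) ∧
    ((T s 1 : ℂ) = Complex.I * ((starRingEnd ℂ) (φ₂ s) * φ₁ s - (starRingEnd ℂ) (φ₁ s) * φ₂ s)) ∧
    ((T s 2 : ℂ) = (starRingEnd ℂ) (φ₁ s) * φ₁ s - (starRingEnd ℂ) (φ₂ s) * φ₂ s) ∧
    ((N s 0 : ℂ) + Complex.I * (B s 0 : ℂ) = φ₁ s ^ 2 - φ₂ s ^ 2) ∧
    ((N s 1 : ℂ) + Complex.I * (B s 1 : ℂ) = Complex.I * (φ₁ s ^ 2 + φ₂ s ^ 2)) ∧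
    ((N s 2 : ℂ) + Complex.I * (B s 2 : ℂ) = -2 * φ₁ s * φ₂ s) := by
  refine ⟨by simpa using hT s 0, by simpa using hT s 1, ?_,
    by simpa using hNB s 0, by simpa using hNB s 1, by simpa using hNB s 2⟩
  have h := hT s 2
  simp only [Matrix.cons_val_two, Matrix.tail_cons, Matrix.head_cons] at h
  rw [h]
  push_cast [Complex.sq_norm]
  rw [← Complex.mul_conj, ← Complex.mul_conj]
  ring

/-- Spinor Frenet equation in the Lie group S³ (τ_G = 1): the Frenet equations T′ = κN, N′ = −κT + (τ − 1)B, B′ = −(τ − 1)N hold iff φ′ = −i((τ − 1)/2)φ + (κ/2)φ̂. -/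
theorem spinor_frenet_S3 (φ₁ φ₂ : ℝ → ℂ) (κ τ : ℝ → ℝ)
    (T N B : ℝ → Fin 3 → ℝ)
    (hd₁ : Differentiable ℝ φ₁) (hd₂ : Differentiable ℝ φ₂)
    (hunit : ∀ s, (starRingEnd ℂ) (φ₁ s) * φ₁ s + (starRingEnd ℂ) (φ₂ s) * φ₂ s = 1)
    (hNB : ∀ s i, (N s i : ℂ) + Complex.I * (B s i : ℂ) =
      ![φ₁ s ^ 2 - φ₂ s ^ 2, Complex.I * (φ₁ s ^ 2 + φ₂ s ^ 2),
        -2 * φ₁ s * φ₂ s] i)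
    (hT : ∀ s i, (T s i : ℂ) =
      ![φ₁ s * (starRingEnd ℂ) (φ₂ s) + (starRingEnd ℂ) (φ₁ s) * φ₂ s,
        Complex.I * ((starRingEnd ℂ) (φ₂ s) * φ₁ s - (starRingEnd ℂ) (φ₁ s) * φ₂ s),
        ((‖φ₁ s‖ ^ 2 - ‖φ₂ s‖ ^ 2 : ℝ) : ℂ)] i) :
    ((∀ s i, deriv (fun t => T t i) s = κ s * N s i) ∧
     (∀ s i, deriv (fun t => N t i) s = -(κ s) * T s i + (τ s - 1) * B s i) ∧
     (∀ s i, deriv (fun t => B t i) s = -(τ s - 1) * N s i)) ↔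
    ((∀ s, deriv φ₁ s =
        -Complex.I * ((τ s - 1 : ℝ) / 2) * φ₁ s + (κ s / 2) * (-(starRingEnd ℂ) (φ₂ s))) ∧
     (∀ s, deriv φ₂ s =
        -Complex.I * ((τ s - 1 : ℝ) / 2) * φ₂ s + (κ s / 2) * ((starRingEnd ℂ) (φ₁ s)))) := by
  obtain ⟨eN0, eB0, eN1, eB1, eN2, eB2, eT0, eT1, eT2⟩ := funs_eq φ₁ φ₂ T N B hNB hT
  constructor
  · rintro ⟨-, hFN, hFB⟩
    have key : ∀ s, (deriv φ₁ s =
        -Complex.I * ((τ s - 1 : ℝ) / 2) * φ₁ s + (κ s / 2) * (-(starRingEnd ℂ) (φ₂ s))) ∧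
        (deriv φ₂ s =
        -Complex.I * ((τ s - 1 : ℝ) / 2) * φ₂ s + (κ s / 2) * ((starRingEnd ℂ) (φ₁ s))) := by
      intro s
      obtain ⟨Hg1, Hg2, Hg3, -, -, -⟩ := derivs_pack φ₁ φ₂ hd₁ hd₂ s
      obtain ⟨cT0, cT1, cT2, cN0, cN1, cN2⟩ := vals_eq φ₁ φ₂ T N B hNB hT s
      have dN0 : deriv (fun t => N t 0) s = (2*φ₁ s*deriv φ₁ s - 2*φ₂ s*deriv φ₂ s).re := by
        rw [show (fun t => N t 0) = (fun t => (φ₁ t ^ 2 - φ₂ t ^ 2).re) from funext eN0]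
        exact (hasDerivAt_re'_s14 Hg1).deriv
      have dB0 : deriv (fun t => B t 0) s = (2*φ₁ s*deriv φ₁ s - 2*φ₂ s*deriv φ₂ s).im := by
        rw [show (fun t => B t 0) = (fun t => (φ₁ t ^ 2 - φ₂ t ^ 2).im) from funext eB0]
        exact (hasDerivAt_im'_s14 Hg1).deriv
      have dN1 : deriv (fun t => N t 1) s
          = (Complex.I*(2*φ₁ s*deriv φ₁ s + 2*φ₂ s*deriv φ₂ s)).re := by
        rw [show (fun t => N t 1) = (fun t => (Complex.I * (φ₁ t ^ 2 + φ₂ t ^ 2)).re) from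
          funext eN1]
        exact (hasDerivAt_re'_s14 Hg2).deriv
      have dB1 : deriv (fun t => B t 1) s
          = (Complex.I*(2*φ₁ s*deriv φ₁ s + 2*φ₂ s*deriv φ₂ s)).im := by
        rw [show (fun t => B t 1) = (fun t => (Complex.I * (φ₁ t ^ 2 + φ₂ t ^ 2)).im) from
          funext eB1]
        exact (hasDerivAt_im'_s14 Hg2).deriv
      have dN2 : deriv (fun t => N t 2) s
          = (-2*(deriv φ₁ s*φ₂ s + φ₁ s*deriv φ₂ s)).re := by
        rw [show (fun t => N t 2) = (fun t => (-2 * φ₁ t * φ₂ t).re) from funext eN2]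
        exact (hasDerivAt_re'_s14 Hg3).deriv
      have dB2 : deriv (fun t => B t 2) s
          = (-2*(deriv φ₁ s*φ₂ s + φ₁ s*deriv φ₂ s)).im := by
        rw [show (fun t => B t 2) = (fun t => (-2 * φ₁ t * φ₂ t).im) from funext eB2]
        exact (hasDerivAt_im'_s14 Hg3).deriv
      have hV0 : 2*φ₁ s*deriv φ₁ s - 2*φ₂ s*deriv φ₂ s
          = -Complex.I*((τ s - 1 : ℝ) : ℂ)*(φ₁ s^2 - φ₂ s^2)
            - ((κ s : ℝ) : ℂ)*(φ₁ s*(starRingEnd ℂ) (φ₂ s) + (starRingEnd ℂ) (φ₁ s)*φ₂ s) := by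
        have hre : (2*φ₁ s*deriv φ₁ s - 2*φ₂ s*deriv φ₂ s).re
            = -(κ s)*T s 0 + (τ s - 1)*B s 0 := by rw [← dN0]; exact hFN s 0
        have him : (2*φ₁ s*deriv φ₁ s - 2*φ₂ s*deriv φ₂ s).im = -(τ s - 1)*N s 0 := by
          rw [← dB0]; exact hFB s 0
        have hz := (Complex.re_add_im (2*φ₁ s*deriv φ₁ s - 2*φ₂ s*deriv φ₂ s)).symm
        rw [hre, him] at hz
        push_cast at hz ⊢
        linear_combination hz - ((κ s : ℝ) : ℂ)*cT0 - Complex.I*(((τ s : ℝ) : ℂ)-1)*cN0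
          + (((τ s : ℝ) : ℂ)-1)*((B s 0 : ℝ) : ℂ)*Complex.I_sq
      have hV1 : Complex.I*(2*φ₁ s*deriv φ₁ s + 2*φ₂ s*deriv φ₂ s)
          = -Complex.I*((τ s - 1 : ℝ) : ℂ)*(Complex.I*(φ₁ s^2 + φ₂ s^2))
            - ((κ s : ℝ) : ℂ)*(Complex.I*((starRingEnd ℂ) (φ₂ s)*φ₁ s
              - (starRingEnd ℂ) (φ₁ s)*φ₂ s)) := by
        have hre : (Complex.I*(2*φ₁ s*deriv φ₁ s + 2*φ₂ s*deriv φ₂ s)).re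
            = -(κ s)*T s 1 + (τ s - 1)*B s 1 := by rw [← dN1]; exact hFN s 1
        have him : (Complex.I*(2*φ₁ s*deriv φ₁ s + 2*φ₂ s*deriv φ₂ s)).im = -(τ s - 1)*N s 1 := by
          rw [← dB1]; exact hFB s 1
        have hz := (Complex.re_add_im (Complex.I*(2*φ₁ s*deriv φ₁ s + 2*φ₂ s*deriv φ₂ s))).symm
        rw [hre, him] at hz
        push_cast at hz ⊢
        linear_combination hz - ((κ s : ℝ) : ℂ)*cT1 - Complex.I*(((τ s : ℝ) : ℂ)-1)*cN1
          + (((τ s : ℝ) : ℂ)-1)*((B s 1 : ℝ) : ℂ)*Complex.I_sq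
      have hV2 : -2*(deriv φ₁ s*φ₂ s + φ₁ s*deriv φ₂ s)
          = -Complex.I*((τ s - 1 : ℝ) : ℂ)*(-2*φ₁ s*φ₂ s)
            - ((κ s : ℝ) : ℂ)*((starRingEnd ℂ) (φ₁ s)*φ₁ s - (starRingEnd ℂ) (φ₂ s)*φ₂ s) := by
        have hre : (-2*(deriv φ₁ s*φ₂ s + φ₁ s*deriv φ₂ s)).re
            = -(κ s)*T s 2 + (τ s - 1)*B s 2 := by rw [← dN2]; exact hFN s 2
        have him : (-2*(deriv φ₁ s*φ₂ s + φ₁ s*deriv φ₂ s)).im = -(τ s - 1)*N s 2 := by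
          rw [← dB2]; exact hFB s 2
        have hz := (Complex.re_add_im (-2*(deriv φ₁ s*φ₂ s + φ₁ s*deriv φ₂ s))).symm
        rw [hre, him] at hz
        push_cast at hz ⊢
        linear_combination hz - ((κ s : ℝ) : ℂ)*cT2 - Complex.I*(((τ s : ℝ) : ℂ)-1)*cN2
          + (((τ s : ℝ) : ℂ)-1)*((B s 2 : ℝ) : ℂ)*Complex.I_sq
      obtain ⟨hu', hv'⟩ := fwd_alg (φ₁ s) (φ₂ s) (deriv φ₁ s) (deriv φ₂ s) (κ s) (τ s - 1)
        (hunit s) hV0 hV1 hV2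
      constructor
      · rw [hu']; try push_cast; try ring
      · rw [hv']
    exact ⟨fun s => (key s).1, fun s => (key s).2⟩
  · rintro ⟨h1, h2⟩
    refine ⟨fun s i => ?_, fun s i => ?_, fun s i => ?_⟩ <;>
      obtain ⟨Hg1, Hg2, Hg3, Hf1, Hf2, Hf3⟩ := derivs_pack φ₁ φ₂ hd₁ hd₂ s <;>
      obtain ⟨G1, G2, G3, F1, F2, F3⟩ := bwd_alg (φ₁ s) (φ₂ s) (deriv φ₁ s) (deriv φ₂ s)
        (κ s) (τ s - 1) (h1 s) (h2 s) <;>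
      obtain ⟨cT0, cT1, cT2, cN0, cN1, cN2⟩ := vals_eq φ₁ φ₂ T N B hNB hT s <;>
      fin_cases i
    · -- T' = κN, i = 0
      show deriv (fun t => T t 0) s = κ s * N s 0
      rw [show (fun t => T t 0) = (fun t => (φ₁ t * (starRingEnd ℂ) (φ₂ t)
          + (starRingEnd ℂ) (φ₁ t) * φ₂ t).re) from funext eT0,
        (hasDerivAt_re'_s14 Hf1).deriv, eN0 s]
      have hG : (((φ₁ s ^ 2 - φ₂ s ^ 2).re : ℝ) : ℂ)
          = ((φ₁ s ^ 2 - φ₂ s ^ 2) + ((starRingEnd ℂ) (φ₁ s) ^ 2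
            - (starRingEnd ℂ) (φ₂ s) ^ 2)) / 2 := by
        rw [show (starRingEnd ℂ) (φ₁ s) ^ 2 - (starRingEnd ℂ) (φ₂ s) ^ 2
            = (starRingEnd ℂ) (φ₁ s ^ 2 - φ₂ s ^ 2) by simp, Complex.add_conj]
        push_cast; ring
      have hfin : deriv φ₁ s*(starRingEnd ℂ) (φ₂ s) + φ₁ s*(starRingEnd ℂ) (deriv φ₂ s)
          + (starRingEnd ℂ) (deriv φ₁ s)*φ₂ s + (starRingEnd ℂ) (φ₁ s)*deriv φ₂ s
          = ((κ s * (φ₁ s ^ 2 - φ₂ s ^ 2).re : ℝ) : ℂ) := by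
        push_cast
        rw [hG]
        linear_combination F1
      rw [hfin, Complex.ofReal_re]
    · -- i = 1
      show deriv (fun t => T t 1) s = κ s * N s 1
      rw [show (fun t => T t 1) = (fun t => (Complex.I * ((starRingEnd ℂ) (φ₂ t) * φ₁ t
          - (starRingEnd ℂ) (φ₁ t) * φ₂ t)).re) from funext eT1,
        (hasDerivAt_re'_s14 Hf2).deriv, eN1 s]
      have hG : (((Complex.I * (φ₁ s ^ 2 + φ₂ s ^ 2)).re : ℝ) : ℂ)
          = ((Complex.I * (φ₁ s ^ 2 + φ₂ s ^ 2)) + (-Complex.I) * ((starRingEnd ℂ) (φ₁ s) ^ 2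
            + (starRingEnd ℂ) (φ₂ s) ^ 2)) / 2 := by
        rw [show (-Complex.I) * ((starRingEnd ℂ) (φ₁ s) ^ 2 + (starRingEnd ℂ) (φ₂ s) ^ 2)
            = (starRingEnd ℂ) (Complex.I * (φ₁ s ^ 2 + φ₂ s ^ 2)) by
            simp only [map_mul, map_add, map_pow, Complex.conj_I]; try ring, Complex.add_conj]
        push_cast; ring
      have hfin : Complex.I*((starRingEnd ℂ) (deriv φ₂ s)*φ₁ s + (starRingEnd ℂ) (φ₂ s)*deriv φ₁ s
          - (starRingEnd ℂ) (deriv φ₁ s)*φ₂ s - (starRingEnd ℂ) (φ₁ s)*deriv φ₂ s)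
          = ((κ s * (Complex.I * (φ₁ s ^ 2 + φ₂ s ^ 2)).re : ℝ) : ℂ) := by
        push_cast
        rw [hG]
        linear_combination F2
      rw [hfin, Complex.ofReal_re]
    · -- i = 2
      show deriv (fun t => T t 2) s = κ s * N s 2
      rw [show (fun t => T t 2) = (fun t => ((starRingEnd ℂ) (φ₁ t) * φ₁ t
          - (starRingEnd ℂ) (φ₂ t) * φ₂ t).re) from funext eT2,
        (hasDerivAt_re'_s14 Hf3).deriv, eN2 s]
      have hG : (((-2 * φ₁ s * φ₂ s).re : ℝ) : ℂ)
          = ((-2 * φ₁ s * φ₂ s) + (-2 * (starRingEnd ℂ) (φ₁ s) * (starRingEnd ℂ) (φ₂ s))) / 2 := by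
        rw [show (-2 : ℂ) * (starRingEnd ℂ) (φ₁ s) * (starRingEnd ℂ) (φ₂ s)
            = (starRingEnd ℂ) (-2 * φ₁ s * φ₂ s) by
            simp only [map_mul, map_neg, map_ofNat]; try ring, Complex.add_conj]
        push_cast; ring
      have hfin : (starRingEnd ℂ) (deriv φ₁ s)*φ₁ s + (starRingEnd ℂ) (φ₁ s)*deriv φ₁ s
          - (starRingEnd ℂ) (deriv φ₂ s)*φ₂ s - (starRingEnd ℂ) (φ₂ s)*deriv φ₂ s
          = ((κ s * (-2 * φ₁ s * φ₂ s).re : ℝ) : ℂ) := by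
        push_cast
        rw [hG]
        linear_combination F3
      rw [hfin, Complex.ofReal_re]
    · -- N' eq, i = 0
      show deriv (fun t => N t 0) s = -(κ s) * T s 0 + (τ s - 1) * B s 0
      rw [show (fun t => N t 0) = (fun t => (φ₁ t ^ 2 - φ₂ t ^ 2).re) from funext eN0,
        (hasDerivAt_re'_s14 Hg1).deriv]
      have hc : 2*φ₁ s*deriv φ₁ s - 2*φ₂ s*deriv φ₂ s
          = ((-(κ s)*T s 0 + (τ s - 1)*B s 0 : ℝ) : ℂ) + ((-(τ s - 1)*N s 0 : ℝ) : ℂ)*Complex.I := by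
        push_cast at G1 ⊢
        linear_combination G1 + ((κ s : ℝ) : ℂ)*cT0 + Complex.I*(((τ s : ℝ) : ℂ)-1)*cN0
          - (((τ s : ℝ) : ℂ)-1)*((B s 0 : ℝ) : ℂ)*Complex.I_sq
      rw [hc]; simp
    · -- N' eq, i = 1
      show deriv (fun t => N t 1) s = -(κ s) * T s 1 + (τ s - 1) * B s 1
      rw [show (fun t => N t 1) = (fun t => (Complex.I * (φ₁ t ^ 2 + φ₂ t ^ 2)).re) from
        funext eN1, (hasDerivAt_re'_s14 Hg2).deriv]
      have hc : Complex.I*(2*φ₁ s*deriv φ₁ s + 2*φ₂ s*deriv φ₂ s)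
          = ((-(κ s)*T s 1 + (τ s - 1)*B s 1 : ℝ) : ℂ) + ((-(τ s - 1)*N s 1 : ℝ) : ℂ)*Complex.I := by
        push_cast at G2 ⊢
        linear_combination G2 + ((κ s : ℝ) : ℂ)*cT1 + Complex.I*(((τ s : ℝ) : ℂ)-1)*cN1
          - (((τ s : ℝ) : ℂ)-1)*((B s 1 : ℝ) : ℂ)*Complex.I_sq
      rw [hc]; simp
    · -- N' eq, i = 2
      show deriv (fun t => N t 2) s = -(κ s) * T s 2 + (τ s - 1) * B s 2
      rw [show (fun t => N t 2) = (fun t => (-2 * φ₁ t * φ₂ t).re) from funext eN2,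
        (hasDerivAt_re'_s14 Hg3).deriv]
      have hc : -2*(deriv φ₁ s*φ₂ s + φ₁ s*deriv φ₂ s)
          = ((-(κ s)*T s 2 + (τ s - 1)*B s 2 : ℝ) : ℂ) + ((-(τ s - 1)*N s 2 : ℝ) : ℂ)*Complex.I := by
        push_cast at G3 ⊢
        linear_combination G3 + ((κ s : ℝ) : ℂ)*cT2 + Complex.I*(((τ s : ℝ) : ℂ)-1)*cN2
          - (((τ s : ℝ) : ℂ)-1)*((B s 2 : ℝ) : ℂ)*Complex.I_sq
      rw [hc]; simp
    · -- B' eq, i = 0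
      show deriv (fun t => B t 0) s = -(τ s - 1) * N s 0
      rw [show (fun t => B t 0) = (fun t => (φ₁ t ^ 2 - φ₂ t ^ 2).im) from funext eB0,
        (hasDerivAt_im'_s14 Hg1).deriv]
      have hc : 2*φ₁ s*deriv φ₁ s - 2*φ₂ s*deriv φ₂ s
          = ((-(κ s)*T s 0 + (τ s - 1)*B s 0 : ℝ) : ℂ) + ((-(τ s - 1)*N s 0 : ℝ) : ℂ)*Complex.I := by
        push_cast at G1 ⊢
        linear_combination G1 + ((κ s : ℝ) : ℂ)*cT0 + Complex.I*(((τ s : ℝ) : ℂ)-1)*cN0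
          - (((τ s : ℝ) : ℂ)-1)*((B s 0 : ℝ) : ℂ)*Complex.I_sq
      rw [hc]; simp
    · -- B' eq, i = 1
      show deriv (fun t => B t 1) s = -(τ s - 1) * N s 1
      rw [show (fun t => B t 1) = (fun t => (Complex.I * (φ₁ t ^ 2 + φ₂ t ^ 2)).im) from
        funext eB1, (hasDerivAt_im'_s14 Hg2).deriv]
      have hc : Complex.I*(2*φ₁ s*deriv φ₁ s + 2*φ₂ s*deriv φ₂ s)
          = ((-(κ s)*T s 1 + (τ s - 1)*B s 1 : ℝ) : ℂ) + ((-(τ s - 1)*N s 1 : ℝ) : ℂ)*Complex.I := by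
        push_cast at G2 ⊢
        linear_combination G2 + ((κ s : ℝ) : ℂ)*cT1 + Complex.I*(((τ s : ℝ) : ℂ)-1)*cN1
          - (((τ s : ℝ) : ℂ)-1)*((B s 1 : ℝ) : ℂ)*Complex.I_sq
      rw [hc]; simp
    · -- B' eq, i = 2
      show deriv (fun t => B t 2) s = -(τ s - 1) * N s 2
      rw [show (fun t => B t 2) = (fun t => (-2 * φ₁ t * φ₂ t).im) from funext eB2,
        (hasDerivAt_im'_s14 Hg3).deriv]
      have hc : -2*(deriv φ₁ s*φ₂ s + φ₁ s*deriv φ₂ s)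
          = ((-(κ s)*T s 2 + (τ s - 1)*B s 2 : ℝ) : ℂ) + ((-(τ s - 1)*N s 2 : ℝ) : ℂ)*Complex.I := by
        push_cast at G3 ⊢
        linear_combination G3 + ((κ s : ℝ) : ℂ)*cT2 + Complex.I*(((τ s : ℝ) : ℂ)-1)*cN2
          - (((τ s : ℝ) : ℂ)-1)*((B s 2 : ℝ) : ℂ)*Complex.I_sq
      rw [hc]; simp
end
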